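/- arXiv:1508.03789 — 10 statements merged into one kernel-verified Lean document; each statement's English description precedes it below -/
import Mathlib

section
/- Let G = diag(g₁,g₂,g₃) with distinct positive entries, Ψ(R,R_d) = (1/2) tr(G(I − R_dᵀR)), and e_R = (1/2)(G R_dᵀ R − Rᵀ R_d G)^∨. Then for any R, R_d ∈ SO(3) and η ∈ ℝ³, the directional derivative satisfies (d/dε)|_{ε=0} Ψ(R exp(ε η̂), R_d) = e_R · η. -/
open Matrix

noncomputable section

/-- The hat map `ℝ³ → 𝔰𝔬(3)`, with `hat x *ᵥ y = x × y`. -/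
def hat (x : Fin 3 → ℝ) : Matrix (Fin 3) (Fin 3) ℝ :=
  !![0, -x 2, x 1; x 2, 0, -x 0; -x 1, x 0, 0]

/-- The vee map, inverse of the hat map on skew-symmetric matrices. -/
def vee (A : Matrix (Fin 3) (Fin 3) ℝ) : Fin 3 → ℝ :=
  ![A 2 1, A 0 2, A 1 0]

/-- Membership in the special orthogonal group SO(3). -/
def SO3 (R : Matrix (Fin 3) (Fin 3) ℝ) : Prop :=
  Rᵀ * R = 1 ∧ R.det = 1

/-- Euclidean norm on `ℝ³` (and `ℝ²`). -/
def norm3 (x : Fin 3 → ℝ) : ℝ := Real.sqrt (x ⬝ᵥ x)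

def norm2v (x : Fin 2 → ℝ) : ℝ := Real.sqrt (x ⬝ᵥ x)

/-- Attitude error function `Ψ(R,R_d) = (1/2) tr (G (I - R_dᵀ R))`. -/
def Psi (G R Rd : Matrix (Fin 3) (Fin 3) ℝ) : ℝ :=
  (1 / 2) * (G * (1 - Rdᵀ * R)).trace

/-- Attitude error vector `e_R = (1/2) (G R_dᵀ R - Rᵀ R_d G)^∨`. -/
def eR (G R Rd : Matrix (Fin 3) (Fin 3) ℝ) : Fin 3 → ℝ :=
  (1 / 2 : ℝ) • vee (G * Rdᵀ * R - Rᵀ * Rd * G)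

/-- Third standard basis vector of `ℝ³`. -/
def e3 : Fin 3 → ℝ := ![0, 0, 1]

/-- directional derivative of `Ψ` along `δR = R η̂` equals `e_R ⋅ η`. -/
theorem psi_directional_derivative (g : Fin 3 → ℝ) (hpos : ∀ i, 0 < g i)
    (hdist : Function.Injective g)
    (R Rd : Matrix (Fin 3) (Fin 3) ℝ) (hR : SO3 R) (hRd : SO3 Rd) (η : Fin 3 → ℝ) :
    deriv (fun ε : ℝ => Psi (diagonal g) (R * NormedSpace.exp (ε • hat η)) Rd) 0
      = eR (diagonal g) R Rd ⬝ᵥ η := by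
  set M : Matrix (Fin 3) (Fin 3) ℝ := diagonal g * Rdᵀ * R with hM
  set ℓ : Matrix (Fin 3) (Fin 3) ℝ →ₗ[ℝ] ℝ :=
    (Matrix.traceLinearMap (Fin 3) ℝ ℝ).comp (LinearMap.mulLeft ℝ M) with hℓ
  have hfun : (fun ε : ℝ => Psi (diagonal g) (R * NormedSpace.exp (ε • hat η)) Rd)
      = fun ε : ℝ => (1/2) * (diagonal g).trace - (1/2) * ℓ (NormedSpace.exp (ε • hat η)) := by
    funext ε
    simp only [Psi, hℓ, LinearMap.comp_apply, LinearMap.mulLeft_apply, traceLinearMap_apply, hM]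
    rw [Matrix.mul_sub, Matrix.mul_one, trace_sub, Matrix.mul_assoc, Matrix.mul_assoc]
    ring
  rw [hfun]
  letI : SeminormedRing (Matrix (Fin 3) (Fin 3) ℝ) := Matrix.linftyOpSemiNormedRing
  letI : NormedRing (Matrix (Fin 3) (Fin 3) ℝ) := Matrix.linftyOpNormedRing
  letI : NormedAlgebra ℝ (Matrix (Fin 3) (Fin 3) ℝ) := Matrix.linftyOpNormedAlgebra
  have hexp : HasDerivAt (fun ε : ℝ => NormedSpace.exp (ε • hat η))
      (NormedSpace.exp ((0:ℝ) • hat η) * hat η) 0 := hasDerivAt_exp_smul_const (hat η) 0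
  have hexp' : HasDerivAt (fun ε : ℝ => NormedSpace.exp (ε • hat η)) (hat η) 0 := by
    simpa using hexp
  have hcomp : HasDerivAt (fun ε : ℝ => ℓ (NormedSpace.exp (ε • hat η))) (ℓ (hat η)) 0 :=
    (LinearMap.toContinuousLinearMap ℓ).hasFDerivAt.comp_hasDerivAt 0 hexp' |>.congr_deriv rfl
  have hfinal : HasDerivAt (fun ε : ℝ => (1/2) * (diagonal g).trace - (1/2) * ℓ (NormedSpace.exp (ε • hat η)))
      (-( (1/2) * ℓ (hat η))) 0 := by
    simpa [Pi.sub_def] using (hasDerivAt_const (0:ℝ) ((1/2) * (diagonal g).trace)).sub ((hcomp.const_mul (1/2 : ℝ)))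
  rw [hfinal.deriv]
  -- algebra
  have hMT : Rᵀ * Rd * diagonal g = Mᵀ := by
    rw [hM, Matrix.transpose_mul, Matrix.transpose_mul, Matrix.transpose_transpose,
      Matrix.diagonal_transpose, Matrix.mul_assoc]
  simp only [hℓ, LinearMap.comp_apply, LinearMap.mulLeft_apply, traceLinearMap_apply,
    eR, hMT, hM]
  rw [Matrix.trace_fin_three]
  simp [vee, hat, Matrix.mul_apply, Fin.sum_univ_three, dotProduct, Matrix.transpose_apply]
  ring
end
end

section
/- Let G = diag(g₁,g₂,g₃), gᵢ > 0 distinct, and let ψ be a positive constant with ψ < h₁ = min{g₁+g₂, g₂+g₃, g₃+g₁}. Define h₄ = max{g₁+g₂, g₂+g₃, g₃+g₁}, h₅ = min{(g₁+g₂)², (g₂+g₃)², (g₃+g₁)²}, and b₂ = h₁h₄/(h₅(h₁−ψ)). Then for all R, R_d ∈ SO(3) with Ψ(R,R_d) < ψ, one has Ψ(R,R_d) ≤ b₂ ‖e_R‖². -/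
open Matrix

noncomputable section

lemma abs_le_one_of_mul_self (a : ℝ) (h : a * a ≤ 1) : -1 ≤ a ∧ a ≤ 1 := by
  constructor <;> nlinarith

lemma nonneg_of_sq_eq_mul (a W T : ℝ) (h : a ^ 2 = W * T) (hT : 0 < T) : 0 ≤ W := by
  nlinarith [sq_nonneg a]

lemma nonpos_of_sq_eq_mul (a W T : ℝ) (h : a ^ 2 = W * T) (hT : T < 0) : W ≤ 0 := by
  nlinarith [sq_nonneg a]

lemma nlb_aux (c0 c1 c2 d0 d1 d2 a0 a1 a2 s0 s1 s2 h₅ : ℝ)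
    (h5a : h₅ ≤ c0 ^ 2) (h5b : h₅ ≤ c1 ^ 2) (h5c : h₅ ≤ c2 ^ 2)
    (hcross : c0 * d0 * (a0 * s0) + c1 * d1 * (a1 * s1) + c2 * d2 * (a2 * s2) = 0) :
    h₅ * (a0 ^ 2 + a1 ^ 2 + a2 ^ 2) ≤
      (c0 * a0 + d0 * s0) ^ 2 + (c1 * a1 + d1 * s1) ^ 2 + (c2 * a2 + d2 * s2) ^ 2 := by
  nlinarith [sq_nonneg (d0 * s0), sq_nonneg (d1 * s1), sq_nonneg (d2 * s2),
    mul_le_mul_of_nonneg_right h5a (sq_nonneg a0),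
    mul_le_mul_of_nonneg_right h5b (sq_nonneg a1),
    mul_le_mul_of_nonneg_right h5c (sq_nonneg a2)]

lemma final_aux (h₁ h₄ h₅ b₂ ψ T P N : ℝ)
    (hh₁pos : 0 < h₁) (hh₄pos : 0 < h₄) (hh₅pos : 0 < h₅)
    (hψ : ψ < h₁) (hψpos : 0 < ψ)
    (hb₂ : b₂ = h₁ * h₄ / (h₅ * (h₁ - ψ)))
    (hT4 : T ≤ 4)
    (hNlb : h₅ * (T * (4 - T)) ≤ 16 * N)
    (hPub : P ≤ h₄ * (4 - T) / 4) (hPlb : h₁ * (4 - T) / 4 ≤ P)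
    (hPψ : P < ψ) : P ≤ b₂ * N := by
  have hd : 0 < h₁ - ψ := by linarith
  have hb₂pos : 0 < b₂ := by rw [hb₂]; positivity
  have hb₂h₅ : b₂ * h₅ * (h₁ - ψ) = h₁ * h₄ := by
    rw [hb₂]; field_simp
  have hTbig : 4 * (h₁ - ψ) ≤ h₁ * T := by nlinarith
  have e1 : 4 * (h₁ - ψ) * (4 - T) ≤ h₁ * T * (4 - T) :=
    mul_le_mul_of_nonneg_right hTbig (by linarith)
  have e2 := mul_le_mul_of_nonneg_left e1 (mul_nonneg hb₂pos.le hh₅pos.le)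
  have l1 : (4 * h₄ * (4 - T)) * h₁ = b₂ * h₅ * (4 * (h₁ - ψ) * (4 - T)) := by
    linear_combination (-(4 * (4 - T))) * hb₂h₅
  have l2 : (b₂ * h₅ * (T * (4 - T))) * h₁ = b₂ * h₅ * (h₁ * T * (4 - T)) := by ring
  have e3 : 4 * h₄ * (4 - T) ≤ b₂ * h₅ * (T * (4 - T)) :=
    le_of_mul_le_mul_right (by linarith) hh₁pos
  have e4 := mul_le_mul_of_nonneg_left hNlb hb₂pos.le
  have l3 : b₂ * (16 * N) = 16 * (b₂ * N) := by ring
  have l4 : b₂ * (h₅ * (T * (4 - T))) = b₂ * h₅ * (T * (4 - T)) := by ring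
  linarith

/-- Scalar core of the argument, stated for the nine entries of `Q = R_dᵀ R`. -/
theorem psi_upper_aux (g0 g1 g2 : ℝ) (hg0 : 0 < g0) (hg1 : 0 < g1) (hg2 : 0 < g2)
    (ψ h₁ h₄ h₅ b₂ : ℝ)
    (hh₁ : h₁ = min (g0 + g1) (min (g1 + g2) (g2 + g0)))
    (hh₄ : h₄ = max (g0 + g1) (max (g1 + g2) (g2 + g0)))
    (hh₅ : h₅ = min ((g0 + g1) ^ 2) (min ((g1 + g2) ^ 2) ((g2 + g0) ^ 2)))
    (hb₂ : b₂ = h₁ * h₄ / (h₅ * (h₁ - ψ)))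
    (hψpos : 0 < ψ) (hψ : ψ < h₁)
    (q00 q01 q02 q10 q11 q12 q20 q21 q22 : ℝ)
    (hrow0 : q00 * q00 + q01 * q01 + q02 * q02 = 1)
    (hrow1 : q10 * q10 + q11 * q11 + q12 * q12 = 1)
    (hrow2 : q20 * q20 + q21 * q21 + q22 * q22 = 1)
    (hcol0 : q00 * q00 + q10 * q10 + q20 * q20 = 1)
    (hcol1 : q01 * q01 + q11 * q11 + q21 * q21 = 1)
    (hcol2 : q02 * q02 + q12 * q12 + q22 * q22 = 1)
    (hcof0 : q11 * q22 - q12 * q21 = q00)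
    (hcof1 : q00 * q22 - q02 * q20 = q11)
    (hcof2 : q00 * q11 - q01 * q10 = q22)
    (P N : ℝ)
    (hP : P = (g0 * (1 - q00) + g1 * (1 - q11) + g2 * (1 - q22)) / 2)
    (hN : N = ((g2 * q21 - g1 * q12) / 2) ^ 2 + ((g0 * q02 - g2 * q20) / 2) ^ 2
        + ((g1 * q10 - g0 * q01) / 2) ^ 2)
    (hPψ : P < ψ) : P ≤ b₂ * N := by
  obtain ⟨T, hT⟩ : ∃ T : ℝ, T = 1 + q00 + q11 + q22 := ⟨_, rfl⟩
  obtain ⟨W0, hW0⟩ : ∃ W0 : ℝ, W0 = 1 + q00 - q11 - q22 := ⟨_, rfl⟩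
  obtain ⟨W1, hW1⟩ : ∃ W1 : ℝ, W1 = 1 + q11 - q22 - q00 := ⟨_, rfl⟩
  obtain ⟨W2, hW2⟩ : ∃ W2 : ℝ, W2 = 1 + q22 - q00 - q11 := ⟨_, rfl⟩
  have hI0 : (q21 - q12) ^ 2 = W0 * T := by
    rw [hW0, hT]; linear_combination hrow1 + hrow2 - hcol0 + 2 * hcof0
  have hI1 : (q02 - q20) ^ 2 = W1 * T := by
    rw [hW1, hT]; linear_combination hrow0 + hrow2 - hcol1 + 2 * hcof1
  have hI2 : (q10 - q01) ^ 2 = W2 * T := by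
    rw [hW2, hT]; linear_combination hrow0 + hrow1 - hcol2 + 2 * hcof2
  have hP01 : (q21 - q12) * (q21 + q12) = (q02 - q20) * (q02 + q20) := by
    linear_combination hrow2 - hcol2
  have hP02 : (q21 - q12) * (q21 + q12) = (q10 - q01) * (q10 + q01) := by
    linear_combination hcol1 - hrow1
  have hd0 : q00 * q00 ≤ 1 := by
    linarith only [hrow0, mul_self_nonneg q01, mul_self_nonneg q02]
  have hd1 : q11 * q11 ≤ 1 := by
    linarith only [hrow1, mul_self_nonneg q10, mul_self_nonneg q12]
  have hd2 : q22 * q22 ≤ 1 := by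
    linarith only [hrow2, mul_self_nonneg q20, mul_self_nonneg q21]
  obtain ⟨hq00, hq00'⟩ := abs_le_one_of_mul_self q00 hd0
  obtain ⟨hq11, hq11'⟩ := abs_le_one_of_mul_self q11 hd1
  obtain ⟨hq22, hq22'⟩ := abs_le_one_of_mul_self q22 hd2
  have hT4 : T ≤ 4 := by rw [hT]; linarith
  have hTnn : 0 ≤ T := by
    by_contra h
    push_neg at h
    have hW0' := nonpos_of_sq_eq_mul _ _ _ hI0 h
    have hW1' := nonpos_of_sq_eq_mul _ _ _ hI1 h
    have hW2' := nonpos_of_sq_eq_mul _ _ _ hI2 h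
    rw [hW0] at hW0'; rw [hW1] at hW1'; rw [hW2] at hW2'; rw [hT] at h
    linarith
  have hW0nn : 0 ≤ W0 := by
    rcases eq_or_lt_of_le hTnn with h | h
    · rw [hW0]; rw [hT] at h; linarith [hq00]
    · exact nonneg_of_sq_eq_mul _ _ _ hI0 h
  have hW1nn : 0 ≤ W1 := by
    rcases eq_or_lt_of_le hTnn with h | h
    · rw [hW1]; rw [hT] at h; linarith [hq11]
    · exact nonneg_of_sq_eq_mul _ _ _ hI1 h
  have hW2nn : 0 ≤ W2 := by
    rcases eq_or_lt_of_le hTnn with h | h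
    · rw [hW2]; rw [hT] at h; linarith [hq22]
    · exact nonneg_of_sq_eq_mul _ _ _ hI2 h
  have hPW : P = ((g1 + g2) * W0 + (g2 + g0) * W1 + (g0 + g1) * W2) / 4 := by
    rw [hP, hW0, hW1, hW2]; ring
  -- bounds involving the constants h₁, h₄, h₅
  have hh₁pos : 0 < h₁ := by
    rw [hh₁]; simp only [lt_min_iff]; exact ⟨by linarith, by linarith, by linarith⟩
  have hh₁a : h₁ ≤ g0 + g1 := by rw [hh₁]; exact min_le_left _ _
  have hh₁b : h₁ ≤ g1 + g2 := le_trans (by rw [hh₁]; exact min_le_right _ _) (min_le_left _ _)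
  have hh₁c : h₁ ≤ g2 + g0 := le_trans (by rw [hh₁]; exact min_le_right _ _) (min_le_right _ _)
  have hh₄a : g0 + g1 ≤ h₄ := by rw [hh₄]; exact le_max_left _ _
  have hh₄b : g1 + g2 ≤ h₄ := le_trans (le_max_left _ _) (by rw [hh₄]; exact le_max_right _ _)
  have hh₄c : g2 + g0 ≤ h₄ := le_trans (le_max_right _ _) (by rw [hh₄]; exact le_max_right _ _)
  have hh₅a : h₅ ≤ (g0 + g1) ^ 2 := by rw [hh₅]; exact min_le_left _ _
  have hh₅b : h₅ ≤ (g1 + g2) ^ 2 :=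
    le_trans (by rw [hh₅]; exact min_le_right _ _) (min_le_left _ _)
  have hh₅c : h₅ ≤ (g2 + g0) ^ 2 :=
    le_trans (by rw [hh₅]; exact min_le_right _ _) (min_le_right _ _)
  have hh₅pos : 0 < h₅ := by
    rw [hh₅]; simp only [lt_min_iff]
    exact ⟨by positivity, by positivity, by positivity⟩
  have hh₄pos : 0 < h₄ := lt_of_lt_of_le (by linarith) hh₄a
  -- lower bound for 16 N
  have hNlb : h₅ * (T * (4 - T)) ≤ 16 * N := by
    have hcross : (g1 + g2) * (g2 - g1) * ((q21 - q12) * (q21 + q12))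
        + (g2 + g0) * (g0 - g2) * ((q02 - q20) * (q02 + q20))
        + (g0 + g1) * (g1 - g0) * ((q10 - q01) * (q10 + q01)) = 0 := by
      rw [← hP01, ← hP02]; ring
    have hmain := nlb_aux (g1 + g2) (g2 + g0) (g0 + g1) (g2 - g1) (g0 - g2) (g1 - g0)
      (q21 - q12) (q02 - q20) (q10 - q01) (q21 + q12) (q02 + q20) (q10 + q01) h₅
      hh₅b hh₅c hh₅a hcross
    have hsum : (q21 - q12) ^ 2 + (q02 - q20) ^ 2 + (q10 - q01) ^ 2 = T * (4 - T) := by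
      rw [hI0, hI1, hI2, hW0, hW1, hW2, hT]; ring
    have h16N : 16 * N = ((g1 + g2) * (q21 - q12) + (g2 - g1) * (q21 + q12)) ^ 2
        + ((g2 + g0) * (q02 - q20) + (g0 - g2) * (q02 + q20)) ^ 2
        + ((g0 + g1) * (q10 - q01) + (g1 - g0) * (q10 + q01)) ^ 2 := by
      rw [hN]; ring
    have hglue : h₅ * ((q21 - q12) ^ 2 + (q02 - q20) ^ 2 + (q10 - q01) ^ 2)
        = h₅ * (T * (4 - T)) := by rw [hsum]
    linarith only [hmain, hglue, h16N]
  -- upper and lower bounds for P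
  have h4T : W0 + W1 + W2 = 4 - T := by rw [hW0, hW1, hW2, hT]; ring
  have hPub : P ≤ h₄ * (4 - T) / 4 := by
    have hglue : h₄ * W0 + h₄ * W1 + h₄ * W2 = h₄ * (4 - T) := by
      linear_combination h₄ * h4T
    linarith only [hPW, hglue,
      mul_le_mul_of_nonneg_right hh₄b hW0nn,
      mul_le_mul_of_nonneg_right hh₄c hW1nn,
      mul_le_mul_of_nonneg_right hh₄a hW2nn]
  have hPlb : h₁ * (4 - T) / 4 ≤ P := by
    have hglue : h₁ * W0 + h₁ * W1 + h₁ * W2 = h₁ * (4 - T) := by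
      linear_combination h₁ * h4T
    linarith only [hPW, hglue,
      mul_le_mul_of_nonneg_right hh₁b hW0nn,
      mul_le_mul_of_nonneg_right hh₁c hW1nn,
      mul_le_mul_of_nonneg_right hh₁a hW2nn]
  exact final_aux h₁ h₄ h₅ b₂ ψ T P N hh₁pos hh₄pos hh₅pos hψ hψpos hb₂ hT4 hNlb hPub hPlb hPψ

/-- upper bound `Ψ(R,R_d) ≤ b₂ ‖e_R‖²` when `Ψ(R,R_d) < ψ < h₁`. -/
theorem psi_upper_bound (g : Fin 3 → ℝ) (hpos : ∀ i, 0 < g i)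
    (hdist : Function.Injective g)
    (ψ h₁ h₄ h₅ b₂ : ℝ)
    (hh₁ : h₁ = min (g 0 + g 1) (min (g 1 + g 2) (g 2 + g 0)))
    (hh₄ : h₄ = max (g 0 + g 1) (max (g 1 + g 2) (g 2 + g 0)))
    (hh₅ : h₅ = min ((g 0 + g 1) ^ 2) (min ((g 1 + g 2) ^ 2) ((g 2 + g 0) ^ 2)))
    (hb₂ : b₂ = h₁ * h₄ / (h₅ * (h₁ - ψ)))
    (hψpos : 0 < ψ) (hψ : ψ < h₁)
    (R Rd : Matrix (Fin 3) (Fin 3) ℝ) (hR : SO3 R) (hRd : SO3 Rd)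
    (hΨ : Psi (diagonal g) R Rd < ψ) :
    Psi (diagonal g) R Rd ≤ b₂ * norm3 (eR (diagonal g) R Rd) ^ 2 := by
  obtain ⟨hRo, hRdet⟩ := hR
  obtain ⟨hRdo, hRddet⟩ := hRd
  set Q := Rdᵀ * R with hQdef
  have hQo : Qᵀ * Q = 1 := by
    have h1 : Rd * Rdᵀ = 1 := mul_eq_one_comm.mp hRdo
    calc Qᵀ * Q = Rᵀ * (Rd * Rdᵀ) * R := by
          simp [hQdef, Matrix.mul_assoc, Matrix.transpose_mul]
    _ = 1 := by rw [h1]; simpa using hRo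
  have hQo' : Q * Qᵀ = 1 := mul_eq_one_comm.mp hQo
  have hQdet : Q.det = 1 := by simp [hQdef, hRdet, hRddet]
  have hadj : Q.adjugate = Qᵀ := by
    have h := Matrix.mul_adjugate Q
    rw [hQdet, one_smul] at h
    calc Q.adjugate = (Qᵀ * Q) * Q.adjugate := by rw [hQo, one_mul]
    _ = Qᵀ * (Q * Q.adjugate) := by rw [Matrix.mul_assoc]
    _ = Qᵀ := by rw [h, mul_one]
  have hrow : ∀ i : Fin 3, Q i 0 * Q i 0 + Q i 1 * Q i 1 + Q i 2 * Q i 2 = 1 := by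
    intro i
    have h := congrArg (fun M => M i i) hQo'
    simpa [Matrix.mul_apply, Fin.sum_univ_three, Matrix.one_apply] using h
  have hcol : ∀ j : Fin 3, Q 0 j * Q 0 j + Q 1 j * Q 1 j + Q 2 j * Q 2 j = 1 := by
    intro j
    have h := congrArg (fun M => M j j) hQo
    simpa [Matrix.mul_apply, Fin.sum_univ_three, Matrix.one_apply] using h
  have hcof0 : Q 1 1 * Q 2 2 - Q 1 2 * Q 2 1 = Q 0 0 := by
    have h := congrArg (fun M => M 0 0) hadj
    simpa [Matrix.adjugate_fin_three] using h
  have hcof1 : Q 0 0 * Q 2 2 - Q 0 2 * Q 2 0 = Q 1 1 := by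
    have h := congrArg (fun M => M 1 1) hadj
    simpa [Matrix.adjugate_fin_three] using h
  have hcof2 : Q 0 0 * Q 1 1 - Q 0 1 * Q 1 0 = Q 2 2 := by
    have h := congrArg (fun M => M 2 2) hadj
    simpa [Matrix.adjugate_fin_three] using h
  have hPsi : Psi (diagonal g) R Rd
      = (g 0 * (1 - Q 0 0) + g 1 * (1 - Q 1 1) + g 2 * (1 - Q 2 2)) / 2 := by
    simp [Psi, Matrix.trace, Matrix.diag, Matrix.mul_apply, Fin.sum_univ_three,
      Matrix.diagonal, Matrix.one_apply, hQdef]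
    ring
  have hE : eR (diagonal g) R Rd
      = ![ (g 2 * Q 2 1 - g 1 * Q 1 2) / 2, (g 0 * Q 0 2 - g 2 * Q 2 0) / 2,
           (g 1 * Q 1 0 - g 0 * Q 0 1) / 2 ] := by
    funext i
    fin_cases i <;>
      simp [eR, vee, hQdef, Matrix.mul_apply, Fin.sum_univ_three, Matrix.diagonal,
        Matrix.transpose_apply] <;> ring
  have hnorm : norm3 (eR (diagonal g) R Rd) ^ 2
      = ((g 2 * Q 2 1 - g 1 * Q 1 2) / 2) ^ 2 + ((g 0 * Q 0 2 - g 2 * Q 2 0) / 2) ^ 2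
        + ((g 1 * Q 1 0 - g 0 * Q 0 1) / 2) ^ 2 := by
    rw [hE, norm3]
    rw [Real.sq_sqrt]
    · simp [dotProduct, Fin.sum_univ_three]; ring
    · have : ∀ v : Fin 3 → ℝ, 0 ≤ v ⬝ᵥ v := fun v => by
        simp [dotProduct, Fin.sum_univ_three]
        exact add_nonneg (add_nonneg (mul_self_nonneg _) (mul_self_nonneg _)) (mul_self_nonneg _)
      exact this _
  rw [hnorm]
  rw [hPsi] at hΨ ⊢
  exact psi_upper_aux (g 0) (g 1) (g 2) (hpos 0) (hpos 1) (hpos 2) ψ h₁ h₄ h₅ b₂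
    hh₁ hh₄ hh₅ hb₂ hψpos hψ
    (Q 0 0) (Q 0 1) (Q 0 2) (Q 1 0) (Q 1 1) (Q 1 2) (Q 2 0) (Q 2 1) (Q 2 2)
    (hrow 0) (hrow 1) (hrow 2) (hcol 0) (hcol 1) (hcol 2) hcof0 hcof1 hcof2
    _ _ rfl rfl hΨ
end
end

section
/- Let R(t), R_d(t) be smooth curves in SO(3) with Ṙ = R Ω̂ and Ṙ_d = R_d Ω̂_d for Ω, Ω_d : ℝ → ℝ³. With G = diag(g₁,g₂,g₃) positive, Ψ = (1/2) tr(G(I − R_dᵀR)), e_R = (1/2)(G R_dᵀ R − Rᵀ R_d G)^∨, and e_Ω = Ω − Rᵀ R_d Ω_d, the time derivative of the error function satisfies Ψ̇ = e_R · e_Ω. -/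
open Matrix

noncomputable section

attribute [local instance] Matrix.normedAddCommGroup Matrix.normedSpace

/- ### Auxiliary lemmas -/

lemma vee_hat (x : Fin 3 → ℝ) : vee (hat x) = x := by
  funext i; fin_cases i <;> simp [vee, hat]

lemma hat_transpose (x : Fin 3 → ℝ) : (hat x)ᵀ = -(hat x) := by
  ext i j; fin_cases i <;> fin_cases j <;> simp [hat]

lemma hat_vee_of_skew {B : Matrix (Fin 3) (Fin 3) ℝ} (hB : Bᵀ = -B) :
    hat (vee B) = B := by
  have h : ∀ i j, B j i = -B i j := by
    intro i j
    have := congrFun (congrFun hB i) j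
    simpa [Matrix.transpose_apply, Matrix.neg_apply] using this
  ext i j
  fin_cases i <;> fin_cases j <;>
    simp [hat, vee] <;>
    linarith [h 0 0, h 1 1, h 2 2, h 0 1, h 0 2, h 1 2]

lemma trace_mul_hat (A : Matrix (Fin 3) (Fin 3) ℝ) (x : Fin 3 → ℝ) :
    (A * hat x).trace = -(vee (A - Aᵀ) ⬝ᵥ x) := by
  simp [Matrix.trace_fin_three, Matrix.mul_apply, Fin.sum_univ_three, hat, vee,
    dotProduct, Matrix.sub_apply, Matrix.transpose_apply]
  ring

lemma hat_mulVec_mul (Q : Matrix (Fin 3) (Fin 3) ℝ) (v : Fin 3 → ℝ) :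
    hat (Q *ᵥ v) * Q = (Q.adjugate)ᵀ * hat v := by
  have h : (Q.adjugate)ᵀ =
      !![Q 1 1 * Q 2 2 - Q 1 2 * Q 2 1,
        -(Q 1 0 * Q 2 2) + Q 1 2 * Q 2 0,
        Q 1 0 * Q 2 1 - Q 1 1 * Q 2 0;
        -(Q 0 1 * Q 2 2) + Q 0 2 * Q 2 1,
        Q 0 0 * Q 2 2 - Q 0 2 * Q 2 0,
        -(Q 0 0 * Q 2 1) + Q 0 1 * Q 2 0;
        Q 0 1 * Q 1 2 - Q 0 2 * Q 1 1,
        -(Q 0 0 * Q 1 2) + Q 0 2 * Q 1 0,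
        Q 0 0 * Q 1 1 - Q 0 1 * Q 1 0] := by
    ext i j
    fin_cases i <;> fin_cases j <;>
      simp [Matrix.transpose_apply, Matrix.adjugate_fin_three]
  rw [h]
  ext i j
  fin_cases i <;> fin_cases j <;>
    · simp [Matrix.mul_apply, Fin.sum_univ_three, hat, Matrix.mulVec, dotProduct]
      ring

lemma SO3.transpose_eq_adjugate {Q : Matrix (Fin 3) (Fin 3) ℝ} (h : SO3 Q) :
    Qᵀ = Q.adjugate := by
  have h1 : Q * Q.adjugate = 1 := by rw [Matrix.mul_adjugate, h.2, one_smul]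
  calc Qᵀ = Qᵀ * (Q * Q.adjugate) := by rw [h1, mul_one]
    _ = (Qᵀ * Q) * Q.adjugate := by rw [mul_assoc]
    _ = Q.adjugate := by rw [h.1, one_mul]

lemma SO3.mul_transpose {Q : Matrix (Fin 3) (Fin 3) ℝ} (h : SO3 Q) :
    Q * Qᵀ = 1 :=
  mul_eq_one_comm.mp h.1

lemma SO3.conj_hat {Q : Matrix (Fin 3) (Fin 3) ℝ} (h : SO3 Q) (v : Fin 3 → ℝ) :
    hat (Q *ᵥ v) = Q * hat v * Qᵀ := by
  have h2 := h.mul_transpose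
  calc hat (Q *ᵥ v) = hat (Q *ᵥ v) * (Q * Qᵀ) := by rw [h2, mul_one]
    _ = (hat (Q *ᵥ v) * Q) * Qᵀ := by rw [mul_assoc]
    _ = ((Q.adjugate)ᵀ * hat v) * Qᵀ := by rw [hat_mulVec_mul]
    _ = Q * hat v * Qᵀ := by rw [← h.transpose_eq_adjugate, Matrix.transpose_transpose]

lemma trace_diag_mul (g : Fin 3 → ℝ) (M : Matrix (Fin 3) (Fin 3) ℝ) :
    (diagonal g * M).trace = ∑ i, g i * M i i := by
  simp [Matrix.trace, Matrix.diag, Matrix.diagonal_mul]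

lemma dot_mulVec3 (Q : Matrix (Fin 3) (Fin 3) ℝ) (w u : Fin 3 → ℝ) :
    (Q *ᵥ w) ⬝ᵥ u = w ⬝ᵥ (Qᵀ *ᵥ u) := by
  simp [dotProduct, Matrix.mulVec, Fin.sum_univ_three, Matrix.transpose_apply]
  ring

/-- `Ψ̇ = e_R ⋅ e_Ω` along solutions of the attitude kinematics. -/
theorem psi_dot_eq (g : Fin 3 → ℝ) (hpos : ∀ i, 0 < g i)
    (R Rd : ℝ → Matrix (Fin 3) (Fin 3) ℝ) (Ω Ωd : ℝ → Fin 3 → ℝ)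
    (hSO : ∀ t, SO3 (R t)) (hSOd : ∀ t, SO3 (Rd t))
    (hR : ∀ t, HasDerivAt R (R t * hat (Ω t)) t)
    (hRd : ∀ t, HasDerivAt Rd (Rd t * hat (Ωd t)) t)
    (t : ℝ) :
    HasDerivAt (fun s => Psi (diagonal g) (R s) (Rd s))
      (eR (diagonal g) (R t) (Rd t) ⬝ᵥ (Ω t - ((R t)ᵀ * Rd t) *ᵥ Ωd t)) t := by
  -- entrywise derivatives
  have entry : ∀ (F : ℝ → Matrix (Fin 3) (Fin 3) ℝ) (F' : Matrix (Fin 3) (Fin 3) ℝ),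
      HasDerivAt F F' t → ∀ i j, HasDerivAt (fun s => F s i j) (F' i j) t := by
    intro F F' hF i j
    have L : Matrix (Fin 3) (Fin 3) ℝ →ₗ[ℝ] ℝ :=
      (LinearMap.proj j).comp (LinearMap.proj (R := ℝ) (φ := fun _ : Fin 3 => Fin 3 → ℝ) i)
    exact (((LinearMap.proj j).comp
      (LinearMap.proj (R := ℝ) (φ := fun _ : Fin 3 => Fin 3 → ℝ)
        i)).toContinuousLinearMap.hasFDerivAt.comp_hasDerivAt t hF)
  set Gm := diagonal g with hGm
  set Rp : Matrix (Fin 3) (Fin 3) ℝ := R t * hat (Ω t) with hRp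
  set Rdp : Matrix (Fin 3) (Fin 3) ℝ := Rd t * hat (Ωd t) with hRdp
  set D1 : ℝ := ∑ i, g i * ∑ k, (Rdp k i * R t k i + Rd t k i * Rp k i) with hD1def
  -- derivative of the scalar expression
  have hs : HasDerivAt (fun s => ∑ i, g i * ∑ k, Rd s k i * R s k i) D1 t := by
    refine HasDerivAt.fun_sum fun i _ => ?_
    exact (HasDerivAt.fun_sum fun k _ =>
      (entry Rd Rdp (hRd t) k i).mul (entry R Rp (hR t) k i)).const_mul (g i)
  have hder : HasDerivAt (fun s => (1 / 2 : ℝ) * (Gm.trace - ∑ i, g i * ∑ k, Rd s k i * R s k i))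
      ((1 / 2 : ℝ) * -D1) t := by
    simpa using (hs.const_sub Gm.trace).const_mul (1 / 2 : ℝ)
  -- the function equals Psi
  have hfun : (fun s => (1 / 2 : ℝ) * (Gm.trace - ∑ i, g i * ∑ k, Rd s k i * R s k i))
      = fun s => Psi Gm (R s) (Rd s) := by
    funext s
    have hQ : ((Rd s)ᵀ * R s) = Matrix.of fun i j => ∑ k, Rd s k i * R s k j := by
      ext i j; simp [Matrix.mul_apply, Matrix.transpose_apply]
    have : (Gm * ((Rd s)ᵀ * R s)).trace = ∑ i, g i * ∑ k, Rd s k i * R s k i := by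
      rw [hGm, trace_diag_mul]
      refine Finset.sum_congr rfl fun i _ => ?_
      simp [Matrix.mul_apply, Matrix.transpose_apply]
    simp only [Psi, Matrix.mul_sub, Matrix.mul_one, Matrix.trace_sub, this]
  rw [← hfun]
  -- now identify the derivative value
  convert hder using 1
  -- algebra
  set Q : Matrix (Fin 3) (Fin 3) ℝ := (Rd t)ᵀ * R t with hQdef
  have hSOQ : SO3 Q := by
    constructor
    · have h1 : Rd t * (Rd t)ᵀ = 1 := mul_eq_one_comm.mp (hSOd t).1
      calc Qᵀ * Q = (R t)ᵀ * ((Rd t) * (Rd t)ᵀ) * (R t) := by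
            simp [hQdef, Matrix.transpose_mul, Matrix.mul_assoc]
        _ = 1 := by rw [h1, Matrix.mul_one]; exact (hSO t).1
    · simp [hQdef, Matrix.det_mul, Matrix.det_transpose, (hSO t).2, (hSOd t).2]
  set B : Matrix (Fin 3) (Fin 3) ℝ := Gm * Q - Qᵀ * Gm with hBdef
  have hGmT : Gmᵀ = Gm := Matrix.diagonal_transpose g
  have hBskew : Bᵀ = -B := by
    simp [hBdef, Matrix.transpose_sub, Matrix.transpose_mul, hGmT,
      Matrix.transpose_transpose]
  -- D1 as a trace
  have hD1 : D1 = (Gm * (Rdpᵀ * R t)).trace + (Gm * ((Rd t)ᵀ * Rp)).trace := by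
    rw [hGm, trace_diag_mul, trace_diag_mul, hD1def, ← Finset.sum_add_distrib]
    refine Finset.sum_congr rfl fun i _ => ?_
    rw [← mul_add]
    congr 1
    rw [Matrix.mul_apply, Matrix.mul_apply, ← Finset.sum_add_distrib]
    simp [Matrix.transpose_apply]
  have h1 : Gm * (Rdpᵀ * R t) = -(Gm * hat (Ωd t) * Q) := by
    rw [hRdp, Matrix.transpose_mul, hat_transpose, hQdef]
    noncomm_ring
  have h2 : Gm * ((Rd t)ᵀ * Rp) = Gm * Q * hat (Ω t) := by
    rw [hRp, hQdef]
    noncomm_ring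
  have hT1 : (Gm * Q * hat (Ω t)).trace = -(vee B ⬝ᵥ Ω t) := by
    rw [trace_mul_hat]
    congr 2
    rw [hBdef, Matrix.transpose_mul, hGmT]
  have hT2 : (Gm * hat (Ωd t) * Q).trace = -((Q *ᵥ vee B) ⬝ᵥ Ωd t) := by
    have hc : (Gm * hat (Ωd t) * Q).trace = (Q * Gm * hat (Ωd t)).trace :=
      Matrix.trace_mul_cycle Gm (hat (Ωd t)) Q
    have hkey : vee (Q * Gm - Gm * Qᵀ) = Q *ᵥ vee B := by
      have h3 : Q * B * Qᵀ = Q * Gm - Gm * Qᵀ := by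
        calc Q * B * Qᵀ = Q * Gm * (Q * Qᵀ) - Q * Qᵀ * (Gm * Qᵀ) := by
              rw [hBdef]; noncomm_ring
          _ = Q * Gm - Gm * Qᵀ := by
              rw [hSOQ.mul_transpose, Matrix.mul_one, Matrix.one_mul]
      calc vee (Q * Gm - Gm * Qᵀ) = vee (Q * B * Qᵀ) := by rw [h3]
        _ = vee (hat (Q *ᵥ vee B)) := by rw [hSOQ.conj_hat, hat_vee_of_skew hBskew]
        _ = Q *ᵥ vee B := vee_hat _
    rw [hc, trace_mul_hat, ← hkey]
    congr 2
    rw [Matrix.transpose_mul, hGmT]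
  have hQT : (R t)ᵀ * Rd t = Qᵀ := by
    rw [hQdef, Matrix.transpose_mul, Matrix.transpose_transpose]
  have heR : eR Gm (R t) (Rd t) = (1 / 2 : ℝ) • vee B := by
    rw [eR, hBdef, hQdef]
    congr 2
    rw [Matrix.transpose_mul, Matrix.transpose_transpose, Matrix.mul_assoc]
  rw [hD1, h1, h2, Matrix.trace_neg, hT1, hT2, heR, hQT, dot_mulVec3]
  rw [smul_dotProduct, dotProduct_sub, smul_eq_mul]
  ring
end
end

section
/- In the case G = I: let R(t), R_d(t) be smooth curves in SO(3) with Ṙ = R Ω̂, Ṙ_d = R_d Ω̂_d, e_R = (1/2)(R_dᵀR − RᵀR_d)^∨ and e_Ω = Ω − RᵀR_dΩ_d. Then ‖ė_R‖ ≤ ‖e_Ω‖ for all t. -/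
open Matrix

noncomputable section

attribute [local instance] Matrix.normedAddCommGroup Matrix.normedSpace

lemma hat_sub' (x y : Fin 3 → ℝ) : hat (x - y) = hat x - hat y := by
  ext i j; fin_cases i <;> fin_cases j <;> simp [hat] <;> ring

/-- Universal conjugation identity: `Aᵀ ⋅ hat (A x) ⋅ A = det A • hat x` for every matrix. -/
lemma univ_conj' (A : Matrix (Fin 3) (Fin 3) ℝ) (x : Fin 3 → ℝ) :
    Aᵀ * hat (A *ᵥ x) * A = A.det • hat x := by
  ext i j
  fin_cases i <;> fin_cases j <;>
    simp [hat, Matrix.mul_apply, Matrix.mulVec, Matrix.det_fin_three, dotProduct,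
      Fin.sum_univ_three] <;> ring

/-- Key estimate: if `Q ∈ SO(3)` then
`‖(1/2) (Q ω̂ - ω̂_d Q - (⋯)ᵀ)^∨‖ ≤ ‖ω - Qᵀ ω_d‖`. -/
lemma key_bound (Q : Matrix (Fin 3) (Fin 3) ℝ) (hQ : Qᵀ * Q = 1) (hdet : Q.det = 1)
    (u w : Fin 3 → ℝ) :
    norm3 ((1/2 : ℝ) • vee ((Q * hat u - hat w * Q) - (Q * hat u - hat w * Q)ᵀ))
      ≤ norm3 (u - Qᵀ *ᵥ w) := by
  have hconj : Q * hat (Qᵀ *ᵥ w) * Qᵀ = hat w := by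
    have h := univ_conj' Qᵀ w
    rw [transpose_transpose, Matrix.det_transpose, hdet, one_smul] at h
    exact h
  have hM : Q * hat u - hat w * Q = Q * hat (u - Qᵀ *ᵥ w) := by
    rw [hat_sub', Matrix.mul_sub]
    congr 1
    calc hat w * Q = Q * hat (Qᵀ *ᵥ w) * Qᵀ * Q := by rw [hconj]
      _ = Q * hat (Qᵀ *ᵥ w) := by rw [mul_assoc, hQ, mul_one]
  rw [hM]
  set v : Fin 3 → ℝ := u - Qᵀ *ᵥ w with hv
  set A : Matrix (Fin 3) (Fin 3) ℝ := Q * hat v with hA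
  have hAA : Aᵀ * A = (hat v)ᵀ * hat v := by
    rw [hA, Matrix.transpose_mul, mul_assoc, ← mul_assoc Qᵀ Q (hat v), hQ, one_mul]
  have hdiag : ∀ j, (Aᵀ * A) j j = ((hat v)ᵀ * hat v) j j := fun j => by rw [hAA]
  have h0 := hdiag 0
  have h1 := hdiag 1
  have h2 := hdiag 2
  simp [Matrix.mul_apply, Matrix.transpose_apply, Fin.sum_univ_three, hat,
    Matrix.vecHead, Matrix.vecTail] at h0 h1 h2
  unfold norm3
  apply Real.sqrt_le_sqrt
  simp only [dotProduct, Fin.sum_univ_three, vee, Pi.smul_apply, smul_eq_mul,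
    Matrix.sub_apply, Matrix.transpose_apply, Matrix.cons_val_zero, Matrix.cons_val_one,
    Matrix.head_cons, Matrix.cons_val_two, Matrix.tail_cons, Pi.sub_apply]
  nlinarith [h0, h1, h2, sq_nonneg (A 2 1 + A 1 2), sq_nonneg (A 0 2 + A 2 0),
    sq_nonneg (A 1 0 + A 0 1), sq_nonneg (A 0 0), sq_nonneg (A 1 1), sq_nonneg (A 2 2)]

/-- with `G = I`, `‖ė_R‖ ≤ ‖e_Ω‖`. -/
theorem eR_dot_bound
    (R Rd : ℝ → Matrix (Fin 3) (Fin 3) ℝ) (Ω Ωd : ℝ → Fin 3 → ℝ)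
    (hSO : ∀ t, SO3 (R t)) (hSOd : ∀ t, SO3 (Rd t))
    (hR : ∀ t, HasDerivAt R (R t * hat (Ω t)) t)
    (hRd : ∀ t, HasDerivAt Rd (Rd t * hat (Ωd t)) t)
    (t : ℝ) :
    norm3 (deriv (fun s => eR 1 (R s) (Rd s)) t)
      ≤ norm3 (Ω t - ((R t)ᵀ * Rd t) *ᵥ Ωd t) := by
  have hRe : ∀ i j, HasDerivAt (fun s => R s i j) ((R t * hat (Ω t)) i j) t :=
    fun i j => (hasDerivAt_pi.mp ((hasDerivAt_pi.mp (hR t)) i)) j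
  have hRde : ∀ i j, HasDerivAt (fun s => Rd s i j) ((Rd t * hat (Ωd t)) i j) t :=
    fun i j => (hasDerivAt_pi.mp ((hasDerivAt_pi.mp (hRd t)) i)) j
  set Q : Matrix (Fin 3) (Fin 3) ℝ := (Rd t)ᵀ * R t with hQdef
  -- derivative of each entry of `R_dᵀ R`
  have hP : ∀ i j : Fin 3, HasDerivAt (fun s => ((Rd s)ᵀ * R s) i j)
      ((Q * hat (Ω t) - hat (Ωd t) * Q) i j) t := by
    intro i j
    have h : HasDerivAt (fun s => ∑ k, Rd s k i * R s k j)
        (∑ k, ((Rd t * hat (Ωd t)) k i * R t k j + Rd t k i * (R t * hat (Ω t)) k j)) t :=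
      HasDerivAt.fun_sum fun k _ => (hRde k i).mul (hRe k j)
    convert h using 2
    · fin_cases i <;> fin_cases j <;>
        simp [hQdef, Matrix.mul_apply, Matrix.sub_apply, Matrix.transpose_apply,
          Fin.sum_univ_three, hat, Matrix.vecMul, dotProduct] <;> ring
    · fin_cases i <;> fin_cases j <;>
        simp [hQdef, Matrix.mul_apply, Matrix.sub_apply, Matrix.transpose_apply,
          Fin.sum_univ_three, hat, Matrix.vecMul, dotProduct] <;> ring
  set Pd : Matrix (Fin 3) (Fin 3) ℝ := Q * hat (Ω t) - hat (Ωd t) * Q with hPd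
  set d : Fin 3 → ℝ := (1/2 : ℝ) • vee (Pd - Pdᵀ) with hd
  have hF : HasDerivAt (fun s => eR 1 (R s) (Rd s)) d t := by
    apply hasDerivAt_pi.mpr
    intro i
    fin_cases i
    · have h := ((hP 2 1).sub (hP 1 2)).const_mul (1/2 : ℝ)
      convert h using 1
      · rfl
      · funext s
        simp [eR, vee, Matrix.mul_apply, Matrix.sub_apply, Matrix.transpose_apply,
          Matrix.one_mul, Matrix.mul_one, Fin.sum_univ_three]
        ring
      · simp [hd, vee, Matrix.sub_apply, Matrix.transpose_apply]
    · have h := ((hP 0 2).sub (hP 2 0)).const_mul (1/2 : ℝ)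
      convert h using 1
      · rfl
      · funext s
        simp [eR, vee, Matrix.mul_apply, Matrix.sub_apply, Matrix.transpose_apply,
          Matrix.one_mul, Matrix.mul_one, Fin.sum_univ_three]
        ring
      · simp [hd, vee, Matrix.sub_apply, Matrix.transpose_apply]
    · have h := ((hP 1 0).sub (hP 0 1)).const_mul (1/2 : ℝ)
      convert h using 1
      · rfl
      · funext s
        simp [eR, vee, Matrix.mul_apply, Matrix.sub_apply, Matrix.transpose_apply,
          Matrix.one_mul, Matrix.mul_one, Fin.sum_univ_three]
        ring
      · simp [hd, vee, Matrix.sub_apply, Matrix.transpose_apply]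
  rw [hF.deriv]
  have hQ : Qᵀ * Q = 1 := by
    have hdd : Rd t * (Rd t)ᵀ = 1 := mul_eq_one_comm.mp (hSOd t).1
    rw [hQdef, Matrix.transpose_mul, transpose_transpose, mul_assoc,
      ← mul_assoc (Rd t) ((Rd t)ᵀ) (R t), hdd, one_mul, (hSO t).1]
  have hdet : Q.det = 1 := by
    rw [hQdef, Matrix.det_mul, Matrix.det_transpose, (hSOd t).2, (hSO t).2, one_mul]
  have hQt : (R t)ᵀ * Rd t = Qᵀ := by
    rw [hQdef, Matrix.transpose_mul, transpose_transpose]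
  rw [hQt]
  exact key_bound Q hQ hdet (Ω t) (Ωd t)
end
end

section
/- Let R, R_c ∈ SO(3), Ψ(R,R_c) = (1/2) tr(I − R_cᵀR), and e_R = (1/2)(R_cᵀR − RᵀR_c)^∨. Then ‖e_R‖² = Ψ(R,R_c)(2 − Ψ(R,R_c)). Consequently, if Ψ(R,R_c) ≤ ψ₁ < 1 then ‖e_R‖ ≤ √(ψ₁(2−ψ₁)) < 1. -/
open Matrix

noncomputable section

/-- `‖e_R‖² = Ψ (2 − Ψ)`, and if `Ψ ≤ ψ₁ < 1` then
`‖e_R‖ ≤ √(ψ₁(2−ψ₁)) < 1`. -/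
theorem eR_norm_sq_eq_psi (R Rc : Matrix (Fin 3) (Fin 3) ℝ)
    (hR : SO3 R) (hRc : SO3 Rc) :
    norm3 (eR 1 R Rc) ^ 2 = Psi 1 R Rc * (2 - Psi 1 R Rc) ∧
    ∀ ψ₁ : ℝ, ψ₁ < 1 → Psi 1 R Rc ≤ ψ₁ →
      norm3 (eR 1 R Rc) ≤ Real.sqrt (ψ₁ * (2 - ψ₁)) ∧
      Real.sqrt (ψ₁ * (2 - ψ₁)) < 1 := by
  set Q : Matrix (Fin 3) (Fin 3) ℝ := Rcᵀ * R with hQdef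
  have hRR : R * Rᵀ = 1 := mul_eq_one_comm.mp hR.1
  have hQT : Rᵀ * Rc = Qᵀ := by rw [hQdef, Matrix.transpose_mul, Matrix.transpose_transpose]
  have hQQt : Q * Qᵀ = 1 := by
    rw [← hQT, hQdef, Matrix.mul_assoc, ← Matrix.mul_assoc R, hRR, Matrix.one_mul, hRc.1]
  have hdet : Q.det = 1 := by
    rw [hQdef, Matrix.det_mul, Matrix.det_transpose, hR.2, hRc.2, mul_one]
  -- entrywise orthonormality of the rows of Q
  have entry : ∀ i j, (Q * Qᵀ) i j = (1 : Matrix (Fin 3) (Fin 3) ℝ) i j := by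
    intro i j; rw [hQQt]
  have h00 := entry 0 0
  have h11 := entry 1 1
  have h22 := entry 2 2
  have h01 := entry 0 1
  have h02 := entry 0 2
  have h12 := entry 1 2
  simp [Matrix.mul_apply, Matrix.transpose_apply, Fin.sum_univ_three, Matrix.one_apply]
    at h00 h11 h22 h01 h02 h12
  rw [Matrix.det_fin_three] at hdet
  -- Psi in terms of Q
  have hPsi : Psi 1 R Rc = (1 / 2) * (3 - (Q 0 0 + Q 1 1 + Q 2 2)) := by
    rw [Psi, Matrix.one_mul, ← hQdef]
    simp [Matrix.trace, Matrix.diag, Fin.sum_univ_three, Matrix.sub_apply, Matrix.one_apply]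
    try ring
  -- eR in terms of Q
  have heR : eR 1 R Rc = ![(Q 2 1 - Q 1 2) / 2, (Q 0 2 - Q 2 0) / 2, (Q 1 0 - Q 0 1) / 2] := by
    funext i
    rw [eR, Matrix.one_mul, Matrix.mul_one, ← hQdef, hQT]
    fin_cases i <;>
      simp [vee, Matrix.sub_apply, Matrix.transpose_apply] <;> ring
  -- the key dot product identity
  have hd : eR 1 R Rc ⬝ᵥ eR 1 R Rc = Psi 1 R Rc * (2 - Psi 1 R Rc) := by
    rw [heR, hPsi]
    simp only [dotProduct, Fin.sum_univ_three, Matrix.cons_val_zero, Matrix.cons_val_one,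
      Matrix.head_cons, Matrix.cons_val_two, Matrix.tail_cons]
    linear_combination
      ((1:ℝ)/4 - (1/2) * (Q 1 1 * Q 2 2 - Q 1 2 * Q 2 1)) * h00 +
      ((1:ℝ)/4 - (1/2) * (Q 0 0 * Q 2 2 - Q 0 2 * Q 2 0)) * h11 +
      ((1:ℝ)/4 - (1/2) * (Q 0 0 * Q 1 1 - Q 0 1 * Q 1 0)) * h22 -
      (1/2) * ((Q 0 2 * Q 2 1 - Q 0 1 * Q 2 2) + (Q 1 2 * Q 2 0 - Q 1 0 * Q 2 2)) * h01 -
      (1/2) * ((Q 0 1 * Q 1 2 - Q 0 2 * Q 1 1) + (Q 1 0 * Q 2 1 - Q 1 1 * Q 2 0)) * h02 -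
      (1/2) * ((Q 0 2 * Q 1 0 - Q 0 0 * Q 1 2) + (Q 0 1 * Q 2 0 - Q 0 0 * Q 2 1)) * h12 +
      (1/2) * (Q 0 0 + Q 1 1 + Q 2 2) * hdet
  have hnn : (0:ℝ) ≤ eR 1 R Rc ⬝ᵥ eR 1 R Rc :=
    Finset.sum_nonneg fun i _ => mul_self_nonneg _
  have hsq : norm3 (eR 1 R Rc) ^ 2 = Psi 1 R Rc * (2 - Psi 1 R Rc) := by
    rw [norm3, Real.sq_sqrt hnn, hd]
  refine ⟨hsq, fun ψ₁ hψlt hψle => ?_⟩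
  have h0 : 0 ≤ Psi 1 R Rc * (2 - Psi 1 R Rc) := hd ▸ hnn
  constructor
  · rw [norm3, hd]
    exact Real.sqrt_le_sqrt (by nlinarith)
  · have hlt1 : ψ₁ * (2 - ψ₁) < 1 := by nlinarith [sq_nonneg (1 - ψ₁)]
    calc Real.sqrt (ψ₁ * (2 - ψ₁)) < Real.sqrt 1 := by
          rcases le_or_gt (ψ₁ * (2 - ψ₁)) 0 with h | h
          · rw [Real.sqrt_eq_zero'.mpr h]
            norm_num
          · exact Real.sqrt_lt_sqrt h.le hlt1
      _ = 1 := Real.sqrt_one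
end
end

section
/- Let R, R_c ∈ SO(3) and suppose Ψ(R,R_c) = (1/2) tr(I − R_cᵀR) < 1. Then e₃ᵀ R_cᵀ R e₃ ≥ 1 − Ψ(R,R_c) > 0, where e₃ = (0,0,1). -/
open Matrix

noncomputable section

/-- `e₃ᵀ R_cᵀ R e₃ ≥ 1 − Ψ(R,R_c) > 0` whenever `Ψ(R,R_c) < 1`. -/
theorem e3_angle_bound (R Rc : Matrix (Fin 3) (Fin 3) ℝ)
    (hR : SO3 R) (hRc : SO3 Rc) (hΨ : Psi 1 R Rc < 1) :
    1 - Psi 1 R Rc ≤ e3 ⬝ᵥ ((Rcᵀ * R) *ᵥ e3) ∧ 0 < 1 - Psi 1 R Rc := by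
  obtain ⟨hR1, hR2⟩ := hR
  obtain ⟨hRc1, hRc2⟩ := hRc
  set Q : Matrix (Fin 3) (Fin 3) ℝ := Rcᵀ * R with hQ
  have h1 : Qᵀ * Q = 1 := by
    have hcc : Rc * Rcᵀ = 1 := mul_eq_one_comm.mp hRc1
    calc Qᵀ * Q = Rᵀ * (Rc * Rcᵀ) * R := by
          simp [hQ, Matrix.transpose_mul, Matrix.mul_assoc]
      _ = 1 := by rw [hcc, Matrix.mul_one, hR1]
  have h2 : Q * Qᵀ = 1 := mul_eq_one_comm.mp h1
  have hdet : Q.det = 1 := by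
    rw [hQ, Matrix.det_mul, Matrix.det_transpose, hRc2, hR2, one_mul]
  have hadjm : Q.adjugate = Qᵀ := by
    calc Q.adjugate = (Qᵀ * Q) * Q.adjugate := by rw [h1, one_mul]
      _ = Qᵀ * (Q * Q.adjugate) := by rw [Matrix.mul_assoc]
      _ = Qᵀ := by rw [Matrix.mul_adjugate, hdet, one_smul, Matrix.mul_one]
  have hadj : Q 2 2 = Q 0 0 * Q 1 1 - Q 0 1 * Q 1 0 := by
    have := congr_fun (congr_fun hadjm 2) 2
    rw [Matrix.adjugate_fin_three] at this
    simpa using this.symm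
  have hRow1 : Q 0 0 * Q 0 0 + Q 0 1 * Q 0 1 + Q 0 2 * Q 0 2 = 1 := by
    have := congr_fun (congr_fun h2 0) 0
    simpa [Matrix.mul_apply, Matrix.transpose_apply, Fin.sum_univ_three,
      Matrix.one_apply] using this
  have hRow2 : Q 1 0 * Q 1 0 + Q 1 1 * Q 1 1 + Q 1 2 * Q 1 2 = 1 := by
    have := congr_fun (congr_fun h2 1) 1
    simpa [Matrix.mul_apply, Matrix.transpose_apply, Fin.sum_univ_three,
      Matrix.one_apply] using this
  have hCol3 : Q 0 2 * Q 0 2 + Q 1 2 * Q 1 2 + Q 2 2 * Q 2 2 = 1 := by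
    have := congr_fun (congr_fun h1 2) 2
    simpa [Matrix.mul_apply, Matrix.transpose_apply, Fin.sum_univ_three,
      Matrix.one_apply] using this
  have hPsi : Psi 1 R Rc = (1 / 2) * (3 - (Q 0 0 + Q 1 1 + Q 2 2)) := by
    simp only [Psi, one_mul, hQ]
    rw [Matrix.trace_sub]
    simp [Matrix.trace, Matrix.diag, Fin.sum_univ_three]
  have he3 : e3 ⬝ᵥ ((Rcᵀ * R) *ᵥ e3) = Q 2 2 := by
    simp [e3, Matrix.mulVec, dotProduct, Fin.sum_univ_three, hQ]
  have hkey : (1 + Q 2 2 - Q 0 0 - Q 1 1) * (1 + Q 0 0 + Q 1 1 + Q 2 2)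
      = (Q 1 0 - Q 0 1) ^ 2 := by
    linear_combination 2 * hadj + hCol3 - hRow1 - hRow2
  have htr : 1 < Q 0 0 + Q 1 1 + Q 2 2 := by
    rw [hPsi] at hΨ; linarith
  have hu : 0 ≤ 1 + Q 2 2 - Q 0 0 - Q 1 1 := by
    nlinarith [sq_nonneg (Q 1 0 - Q 0 1), hkey, htr]
  constructor
  · rw [hPsi, he3]; linarith
  · rw [hPsi]; linarith
end
end

section
/- For R, R_c ∈ SO(3) with Ψ(R,R_c) = (1/2)tr(I − R_cᵀR) < 1, and e_R = (1/2)(R_cᵀR − RᵀR_c)^∨, the vector X₀ = (e₃ᵀ R_cᵀ R e₃)(R e₃) − R_c e₃ satisfies ‖X₀‖ ≤ ‖e_R‖. -/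
open Matrix

noncomputable section

set_option maxHeartbeats 1000000 in
lemma core_ineq (a b c d e f g h i : ℝ)
    (h1 : a^2+b^2+c^2 = 1) (h2 : d^2+e^2+f^2 = 1) (h3 : g^2+h^2+i^2 = 1)
    (c3 : c^2+f^2+i^2 = 1)
    (hcfa : e*i - f*h = a) (hcfe : a*i - c*g = e) (hcfi : a*e - b*d = i)
    (htr : 1 < a + e + i) :
    4 - 4*i^2 ≤ (h-f)^2 + (c-g)^2 + (d-b)^2 := by
  have hB : 0 ≤ (1+i-a-e)*(1-i) := by nlinarith [sq_nonneg (c+g), sq_nonneg (f+h)]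
  have hSig : (h-f)^2 + (c-g)^2 + (d-b)^2 = 3 + 2*(a+e+i) - (a+e+i)^2 := by
    linear_combination h1 + h2 + h3 + 2*hcfa + 2*hcfe + 2*hcfi
  have hi1 : i ≤ 1 := by nlinarith [sq_nonneg g, sq_nonneg h, sq_nonneg (i-1)]
  have ha1 : a ≤ 1 := by nlinarith [sq_nonneg b, sq_nonneg c, sq_nonneg (a-1)]
  have he1 : e ≤ 1 := by nlinarith [sq_nonneg d, sq_nonneg f, sq_nonneg (e-1)]
  have hx : 0 ≤ 1 + i - a - e := by
    rcases lt_or_eq_of_le hi1 with hlt | heq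
    · have h1i : 0 < 1 - i := by linarith
      exact nonneg_of_mul_nonneg_right (by linarith [hB] : (0:ℝ) ≤ (1-i)*(1+i-a-e)) h1i
    · linarith
  have hipos : 0 < i := by linarith
  have htr' : 0 ≤ a + e + i - 1 := by linarith
  rw [hSig]
  linarith [mul_nonneg hx htr', mul_nonneg hx hipos.le]

/-- `‖(e₃ᵀR_cᵀRe₃)(Re₃) − R_ce₃‖ ≤ ‖e_R‖` whenever `Ψ(R,R_c) < 1`. -/
theorem X0_bound (R Rc : Matrix (Fin 3) (Fin 3) ℝ)
    (hR : SO3 R) (hRc : SO3 Rc) (hΨ : Psi 1 R Rc < 1) :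
    norm3 ((e3 ⬝ᵥ ((Rcᵀ * R) *ᵥ e3)) • (R *ᵥ e3) - Rc *ᵥ e3) ≤ norm3 (eR 1 R Rc) := by
  obtain ⟨hR1, hR2⟩ := hR
  obtain ⟨hRc1, hRc2⟩ := hRc
  have hRo : R * Rᵀ = 1 := mul_eq_one_comm.mp hR1
  have hRco : Rc * Rcᵀ = 1 := mul_eq_one_comm.mp hRc1
  set Q : Matrix (Fin 3) (Fin 3) ℝ := Rcᵀ * R with hQdef
  have hQ1 : Qᵀ * Q = 1 := by
    rw [hQdef, transpose_mul, transpose_transpose]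
    calc Rᵀ * Rc * (Rcᵀ * R) = Rᵀ * (Rc * Rcᵀ) * R := by
          simp only [Matrix.mul_assoc]
    _ = 1 := by rw [hRco, Matrix.mul_one, hR1]
  have hQ2 : Q * Qᵀ = 1 := mul_eq_one_comm.mp hQ1
  have hdet : Q.det = 1 := by
    rw [hQdef, det_mul, det_transpose, hR2, hRc2, mul_one]
  have hadj : Q.adjugate = Qᵀ := by
    have h1 : Q.adjugate * Q = 1 := by rw [adjugate_mul, hdet, one_smul]
    calc Q.adjugate = Q.adjugate * (Q * Qᵀ) := by rw [hQ2, Matrix.mul_one]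
      _ = (Q.adjugate * Q) * Qᵀ := (Matrix.mul_assoc _ _ _).symm
      _ = Qᵀ := by rw [h1, Matrix.one_mul]
  have htr : 1 < Q 0 0 + Q 1 1 + Q 2 2 := by
    have : Psi 1 R Rc = (1/2) * (3 - (Q 0 0 + Q 1 1 + Q 2 2)) := by
      rw [Psi, Matrix.one_mul, trace_sub, ← hQdef, trace_fin_three Q, Matrix.trace_one]
      norm_num
    rw [this] at hΨ
    linarith
  -- scalar equations
  have e00 := congrFun (congrFun hQ2 0) 0
  have e11 := congrFun (congrFun hQ2 1) 1
  have e22 := congrFun (congrFun hQ2 2) 2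
  have f22 := congrFun (congrFun hQ1 2) 2
  simp [mul_apply, Fin.sum_univ_three, one_apply] at e00 e11 e22 f22
  have hA := hadj
  rw [adjugate_fin_three] at hA
  have a00 := congrFun (congrFun hA 0) 0
  have a11 := congrFun (congrFun hA 1) 1
  have a22 := congrFun (congrFun hA 2) 2
  simp [transpose_apply] at a00 a11 a22
  have key := core_ineq (Q 0 0) (Q 0 1) (Q 0 2) (Q 1 0) (Q 1 1) (Q 1 2) (Q 2 0) (Q 2 1) (Q 2 2)
    (by linear_combination e00) (by linear_combination e11) (by linear_combination e22)
    (by linear_combination f22) (by linear_combination a00) (by linear_combination a11)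
    (by linear_combination a22) htr
  -- norms
  have hu : R 0 2^2 + R 1 2^2 + R 2 2^2 = 1 := by
    have := congrFun (congrFun hR1 2) 2
    simp [mul_apply, Fin.sum_univ_three, one_apply] at this
    linear_combination this
  have hv : Rc 0 2^2 + Rc 1 2^2 + Rc 2 2^2 = 1 := by
    have := congrFun (congrFun hRc1 2) 2
    simp [mul_apply, Fin.sum_univ_three, one_apply] at this
    linear_combination this
  have hq22 : Q 2 2 = Rc 0 2 * R 0 2 + Rc 1 2 * R 1 2 + Rc 2 2 * R 2 2 := by
    simp [hQdef, mul_apply, Fin.sum_univ_three]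
  have hL : ((e3 ⬝ᵥ (Q *ᵥ e3)) • (R *ᵥ e3) - Rc *ᵥ e3) ⬝ᵥ
      ((e3 ⬝ᵥ (Q *ᵥ e3)) • (R *ᵥ e3) - Rc *ᵥ e3) = 1 - (Q 2 2)^2 := by
    simp only [dotProduct, mulVec, e3, Fin.sum_univ_three, Pi.sub_apply, Pi.smul_apply,
      smul_eq_mul, Matrix.cons_val_zero, Matrix.cons_val_one, Matrix.head_cons,
      Matrix.cons_val_two, Matrix.tail_cons]
    rw [hq22]
    linear_combination (Rc 0 2 * R 0 2 + Rc 1 2 * R 1 2 + Rc 2 2 * R 2 2)^2 * hu + hv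
  have hE : eR 1 R Rc ⬝ᵥ eR 1 R Rc =
      (1/4)*((Q 2 1 - Q 1 2)^2 + (Q 0 2 - Q 2 0)^2 + (Q 1 0 - Q 0 1)^2) := by
    simp only [eR, Matrix.one_mul, Matrix.mul_one, vee, hQdef, Matrix.sub_apply, mul_apply,
      transpose_apply, Fin.sum_univ_three, dotProduct, Pi.smul_apply, smul_eq_mul,
      Matrix.cons_val_zero, Matrix.cons_val_one, Matrix.head_cons, Matrix.cons_val_two,
      Matrix.tail_cons]
    ring
  rw [norm3, norm3]
  apply Real.sqrt_le_sqrt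
  rw [hL, hE]
  linarith [key]
end
end

section
/- Let Ψ(R,R_c) = (1/2)tr(I − R_cᵀR) and e_R = (1/2)(R_cᵀR − RᵀR_c)^∨ with ψ₁ < 1. For all R, R_c ∈ SO(3) with Ψ(R,R_c) < ψ₁: (1/2)‖e_R‖² ≤ Ψ(R,R_c) ≤ (1/(2−ψ₁))‖e_R‖². -/
open Matrix

noncomputable section

lemma adj_eq_transpose (Q : Matrix (Fin 3) (Fin 3) ℝ) (h1 : Qᵀ * Q = 1) (hd : Q.det = 1) :
    Q.adjugate = Qᵀ := by
  have h1' : Q * Qᵀ = 1 := mul_eq_one_comm.mp h1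
  calc Q.adjugate = Q.adjugate * (Q * Qᵀ) := by rw [h1', Matrix.mul_one]
  _ = (Q.adjugate * Q) * Qᵀ := by rw [Matrix.mul_assoc]
  _ = Qᵀ := by rw [Matrix.adjugate_mul, hd, one_smul, Matrix.one_mul]

lemma key_identity (Q : Matrix (Fin 3) (Fin 3) ℝ) (h1 : Qᵀ * Q = 1) (hd : Q.det = 1) :
    (Q 2 1 - Q 1 2)^2 + (Q 0 2 - Q 2 0)^2 + (Q 1 0 - Q 0 1)^2
      = 3 + 2*(Q 0 0 + Q 1 1 + Q 2 2) - (Q 0 0 + Q 1 1 + Q 2 2)^2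
    ∧ Q 0 0 + Q 1 1 + Q 2 2 ≤ 3 := by
  have hcol : ∀ i, Q 0 i ^ 2 + Q 1 i ^ 2 + Q 2 i ^ 2 = 1 := by
    intro i
    have := congrFun (congrFun h1 i) i
    simpa [Matrix.mul_apply, Fin.sum_univ_three, Matrix.one_apply, sq] using this
  have hadj := adj_eq_transpose Q h1 hd
  rw [Matrix.adjugate_fin_three] at hadj
  have h00 : Q 0 0 = Q 1 1 * Q 2 2 - Q 1 2 * Q 2 1 := by
    have := congrFun (congrFun hadj 0) 0; simpa using this.symm
  have h11 : Q 1 1 = Q 0 0 * Q 2 2 - Q 0 2 * Q 2 0 := by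
    have := congrFun (congrFun hadj 1) 1; simpa using this.symm
  have h22 : Q 2 2 = Q 0 0 * Q 1 1 - Q 0 1 * Q 1 0 := by
    have := congrFun (congrFun hadj 2) 2; simpa using this.symm
  have c0 := hcol 0; have c1 := hcol 1; have c2 := hcol 2
  constructor
  · nlinarith [c0, c1, c2, h00, h11, h22]
  · nlinarith [sq_nonneg (Q 0 0 - 1), sq_nonneg (Q 1 1 - 1), sq_nonneg (Q 2 2 - 1),
      sq_nonneg (Q 1 0), sq_nonneg (Q 2 0), sq_nonneg (Q 0 1), sq_nonneg (Q 2 1),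
      sq_nonneg (Q 0 2), sq_nonneg (Q 1 2)]

/-- `(1/2)‖e_R‖² ≤ Ψ(R,R_c) ≤ (1/(2−ψ₁))‖e_R‖²` when `Ψ(R,R_c) < ψ₁ < 1`. -/
theorem psi_sandwich (ψ₁ : ℝ) (hψpos : 0 < ψ₁) (hψlt : ψ₁ < 1)
    (R Rc : Matrix (Fin 3) (Fin 3) ℝ) (hR : SO3 R) (hRc : SO3 Rc)
    (hΨ : Psi 1 R Rc < ψ₁) :
    (1 / 2) * norm3 (eR 1 R Rc) ^ 2 ≤ Psi 1 R Rc ∧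
    Psi 1 R Rc ≤ (1 / (2 - ψ₁)) * norm3 (eR 1 R Rc) ^ 2 := by
  have hRc' : Rc * Rcᵀ = 1 := mul_eq_one_comm.mp hRc.1
  have hQ1 : (Rcᵀ * R)ᵀ * (Rcᵀ * R) = 1 := by
    rw [transpose_mul, transpose_transpose, Matrix.mul_assoc, ← Matrix.mul_assoc Rc,
      hRc', Matrix.one_mul, hR.1]
  have hQdet : (Rcᵀ * R).det = 1 := by
    simp [det_mul, det_transpose, hR.2, hRc.2]
  obtain ⟨hkey, htle⟩ := key_identity (Rcᵀ * R) hQ1 hQdet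
  have hT : Rᵀ * Rc = (Rcᵀ * R)ᵀ := by rw [transpose_mul, transpose_transpose]
  set Q := Rcᵀ * R with hQdef
  have hPsi : Psi 1 R Rc = (3 - (Q 0 0 + Q 1 1 + Q 2 2)) / 2 := by
    simp only [Psi, Matrix.one_mul, ← hQdef, Matrix.trace_sub, Matrix.trace_one]
    simp [Matrix.trace, Fin.sum_univ_three, Matrix.diag]
    ring
  have heR : eR 1 R Rc = (1/2 : ℝ) • ![Q 2 1 - Q 1 2, Q 0 2 - Q 2 0, Q 1 0 - Q 0 1] := by
    funext i
    simp only [eR, Matrix.one_mul, Matrix.mul_one, hT, vee, ← hQdef]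
    fin_cases i <;>
      simp [Matrix.sub_apply, Matrix.transpose_apply]
  have hnorm : norm3 (eR 1 R Rc) ^ 2 =
      ((Q 2 1 - Q 1 2)^2 + (Q 0 2 - Q 2 0)^2 + (Q 1 0 - Q 0 1)^2) / 4 := by
    have hd : eR 1 R Rc ⬝ᵥ eR 1 R Rc =
        ((Q 2 1 - Q 1 2)^2 + (Q 0 2 - Q 2 0)^2 + (Q 1 0 - Q 0 1)^2) / 4 := by
      rw [heR]
      simp [dotProduct, Fin.sum_univ_three]
      ring
    rw [norm3, Real.sq_sqrt, hd]
    rw [hd]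
    positivity
  set t := Q 0 0 + Q 1 1 + Q 2 2 with ht
  rw [hPsi] at hΨ ⊢
  rw [hnorm, hkey]
  constructor
  · nlinarith [sq_nonneg (3 - t)]
  · have h2 : (0:ℝ) < 2 - ψ₁ := by linarith
    have h3 : 0 ≤ 3 - t := by linarith
    have h4 : 0 ≤ 2*ψ₁ - (3 - t) := by linarith
    rw [one_div, inv_mul_eq_div, le_div_iff₀ h2]
    nlinarith [mul_nonneg h3 h4]
end
end

section
/- (Attitude error dynamics) Consider the rigid body equations Ṙ = RΩ̂, JΩ̇ + Ω × JΩ = M, a desired trajectory with Ṙ_d = R_dΩ̂_d, errors e_Ω = Ω − RᵀR_dΩ_d, and moment input M = −k_R e_R − k_Ω e_Ω + (RᵀR_dΩ_d)^∧ J RᵀR_dΩ_d + J RᵀR_d Ω̇_d. Then J ė_Ω = (J e_Ω + d)^∧ e_Ω − k_R e_R − k_Ω e_Ω, where d = (2J − tr(J)I) RᵀR_d Ω_d. -/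
open Matrix

noncomputable section

attribute [local instance] Matrix.normedAddCommGroup Matrix.normedSpace

lemma hat_mulVec (x y : Fin 3 → ℝ) : hat x *ᵥ y = crossProduct x y := by
  ext i
  fin_cases i <;>
    simp [hat, cross_apply, Matrix.mulVec, Matrix.vecMul, dotProduct, Fin.sum_univ_three] <;> ring

lemma cross_identity (J : Matrix (Fin 3) (Fin 3) ℝ) (hJs : ∀ i j, J i j = J j i)
    (Ω v : Fin 3 → ℝ) :
    hat (J *ᵥ (Ω - v) + ((2 : ℝ) • J - J.trace • (1 : Matrix (Fin 3) (Fin 3) ℝ)) *ᵥ v) *ᵥ (Ω - v)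
      = hat v *ᵥ (J *ᵥ v) - crossProduct Ω (J *ᵥ Ω) + J *ᵥ (crossProduct Ω v) := by
  ext i
  fin_cases i <;>
    simp [hat, cross_apply, Matrix.mulVec, Matrix.vecMul, dotProduct, Fin.sum_univ_three,
      Matrix.trace, Matrix.diag, Matrix.smul_apply, Matrix.sub_apply, Matrix.one_apply,
      Pi.sub_apply, smul_eq_mul] <;>
    rw [hJs 1 0, hJs 2 0, hJs 2 1] <;> ring


set_option maxHeartbeats 1000000 in
/-- attitude error dynamics
`J ė_Ω = (J e_Ω + d)^∧ e_Ω − k_R e_R − k_Ω e_Ω` with `d = (2J − tr(J)I) RᵀR_d Ω_d`. -/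
theorem attitude_error_dynamics
    (J : Matrix (Fin 3) (Fin 3) ℝ) (hJ : J.PosDef)
    (kR kΩ : ℝ) (hkR : 0 < kR) (hkΩ : 0 < kΩ)
    (R Rd : ℝ → Matrix (Fin 3) (Fin 3) ℝ) (Ω Ω' Ωd Ωd' M : ℝ → Fin 3 → ℝ)
    (hSO : ∀ t, SO3 (R t)) (hSOd : ∀ t, SO3 (Rd t))
    (hR : ∀ t, HasDerivAt R (R t * hat (Ω t)) t)
    (hRd : ∀ t, HasDerivAt Rd (Rd t * hat (Ωd t)) t)
    (hΩ : ∀ t, HasDerivAt Ω (Ω' t) t)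
    (hΩd : ∀ t, HasDerivAt Ωd (Ωd' t) t)
    (hdyn : ∀ t, J *ᵥ Ω' t + crossProduct (Ω t) (J *ᵥ Ω t) = M t)
    (hM : ∀ t, M t =
      -(kR • eR 1 (R t) (Rd t)) - kΩ • (Ω t - ((R t)ᵀ * Rd t) *ᵥ Ωd t)
        + hat (((R t)ᵀ * Rd t) *ᵥ Ωd t) *ᵥ (J *ᵥ (((R t)ᵀ * Rd t) *ᵥ Ωd t))
        + J *ᵥ (((R t)ᵀ * Rd t) *ᵥ Ωd' t))
    (t : ℝ) :
    HasDerivAt (fun s => J *ᵥ (Ω s - ((R s)ᵀ * Rd s) *ᵥ Ωd s))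
      (hat (J *ᵥ (Ω t - ((R t)ᵀ * Rd t) *ᵥ Ωd t)
            + ((2 : ℝ) • J - J.trace • (1 : Matrix (Fin 3) (Fin 3) ℝ))
                *ᵥ (((R t)ᵀ * Rd t) *ᵥ Ωd t))
          *ᵥ (Ω t - ((R t)ᵀ * Rd t) *ᵥ Ωd t)
        - kR • eR 1 (R t) (Rd t) - kΩ • (Ω t - ((R t)ᵀ * Rd t) *ᵥ Ωd t)) t := by
  have hJs : ∀ i j, J i j = J j i := by
    intro i j
    have h := congrFun (congrFun hJ.isHermitian j) i
    simpa [Matrix.conjTranspose_apply] using h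
  have key : J *ᵥ Ω' t = M t - crossProduct (Ω t) (J *ᵥ Ω t) :=
    eq_sub_of_add_eq (hdyn t)
  have hRe : ∀ a b, HasDerivAt (fun s => R s a b) ((R t * hat (Ω t)) a b) t :=
    fun a b => hasDerivAt_pi.mp (hasDerivAt_pi.mp (hR t) a) b
  have hRde : ∀ a b, HasDerivAt (fun s => Rd s a b) ((Rd t * hat (Ωd t)) a b) t :=
    fun a b => hasDerivAt_pi.mp (hasDerivAt_pi.mp (hRd t) a) b
  have hΩe : ∀ j, HasDerivAt (fun s => Ω s j) (Ω' t j) t :=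
    fun j => hasDerivAt_pi.mp (hΩ t) j
  have hΩde : ∀ j, HasDerivAt (fun s => Ωd s j) (Ωd' t j) t :=
    fun j => hasDerivAt_pi.mp (hΩd t) j
  -- the vector-level identity for the claimed derivative value
  have hvecEq :
      (hat (J *ᵥ (Ω t - ((R t)ᵀ * Rd t) *ᵥ Ωd t)
            + ((2 : ℝ) • J - J.trace • (1 : Matrix (Fin 3) (Fin 3) ℝ))
                *ᵥ (((R t)ᵀ * Rd t) *ᵥ Ωd t))
          *ᵥ (Ω t - ((R t)ᵀ * Rd t) *ᵥ Ωd t)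
        - kR • eR 1 (R t) (Rd t) - kΩ • (Ω t - ((R t)ᵀ * Rd t) *ᵥ Ωd t))
      = J *ᵥ (Ω' t - (-(crossProduct (Ω t) (((R t)ᵀ * Rd t) *ᵥ Ωd t))
          + ((R t)ᵀ * Rd t) *ᵥ Ωd' t)) := by
    rw [cross_identity J hJs, Matrix.mulVec_sub, key, hM t, Matrix.mulVec_add,
      Matrix.mulVec_neg]
    abel
  -- the matrix-level simplification of the derivative of RᵀRd Ωd
  have hS : ∀ j : Fin 3,
      (∑ k, ((∑ l, ((R t * hat (Ω t)) l j * Rd t l k + R t l j * (Rd t * hat (Ωd t)) l k)) * Ωd t k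
        + (∑ l, R t l j * Rd t l k) * Ωd' t k))
      = (-(crossProduct (Ω t) (((R t)ᵀ * Rd t) *ᵥ Ωd t)) + ((R t)ᵀ * Rd t) *ᵥ Ωd' t) j := by
    intro j
    have hsplit : (∑ k, ((∑ l, ((R t * hat (Ω t)) l j * Rd t l k + R t l j * (Rd t * hat (Ωd t)) l k)) * Ωd t k
        + (∑ l, R t l j * Rd t l k) * Ωd' t k))
        = (((R t * hat (Ω t))ᵀ * Rd t) *ᵥ Ωd t) j + (((R t)ᵀ * (Rd t * hat (Ωd t))) *ᵥ Ωd t) j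
          + (((R t)ᵀ * Rd t) *ᵥ Ωd' t) j := by
      simp [Matrix.mulVec, dotProduct, Matrix.mul_apply, Matrix.transpose_apply,
        add_mul, mul_add, Finset.sum_add_distrib, mul_comm]
    have h1 : (R t * hat (Ω t))ᵀ * Rd t = -(hat (Ω t) * ((R t)ᵀ * Rd t)) := by
      rw [Matrix.transpose_mul, hat_transpose]
      simp [Matrix.mul_assoc]
    have h2 : ((R t)ᵀ * (Rd t * hat (Ωd t))) *ᵥ Ωd t = 0 := by
      rw [← Matrix.mul_assoc, ← Matrix.mulVec_mulVec, hat_mulVec, cross_self, Matrix.mulVec_zero]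
    rw [hsplit, h1, h2]
    simp only [Matrix.neg_mulVec, ← Matrix.mulVec_mulVec, hat_mulVec, Pi.add_apply,
      Pi.neg_apply, Pi.zero_apply, add_zero, zero_add]
  rw [hasDerivAt_pi]
  intro i
  have hv : ∀ j : Fin 3, HasDerivAt (fun s => ∑ k, (∑ l, R s l j * Rd s l k) * Ωd s k)
      (∑ k, ((∑ l, ((R t * hat (Ω t)) l j * Rd t l k + R t l j * (Rd t * hat (Ωd t)) l k)) * Ωd t k
        + (∑ l, R t l j * Rd t l k) * Ωd' t k)) t := by
    intro j
    exact HasDerivAt.fun_sum fun k _ =>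
      (HasDerivAt.fun_sum fun l _ => (hRe l j).mul (hRde l k)).mul (hΩde k)
  have main : HasDerivAt
      (fun s => ∑ j, J i j * (Ω s j - ∑ k, (∑ l, R s l j * Rd s l k) * Ωd s k))
      (∑ j, J i j * (Ω' t j - ∑ k, ((∑ l, ((R t * hat (Ω t)) l j * Rd t l k + R t l j * (Rd t * hat (Ωd t)) l k)) * Ωd t k
        + (∑ l, R t l j * Rd t l k) * Ωd' t k))) t :=
    HasDerivAt.fun_sum fun j _ => ((hΩe j).sub (hv j)).const_mul (J i j)
  have hfun : (fun s => (J *ᵥ (Ω s - ((R s)ᵀ * Rd s) *ᵥ Ωd s)) i)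
      = (fun s => ∑ j, J i j * (Ω s j - ∑ k, (∑ l, R s l j * Rd s l k) * Ωd s k)) := by
    funext s
    simp [Matrix.mulVec, dotProduct, Matrix.mul_apply, Matrix.transpose_apply,
      Pi.sub_apply, Finset.mul_sum]
  have goal_eq : (hat (J *ᵥ (Ω t - ((R t)ᵀ * Rd t) *ᵥ Ωd t)
            + ((2 : ℝ) • J - J.trace • (1 : Matrix (Fin 3) (Fin 3) ℝ))
                *ᵥ (((R t)ᵀ * Rd t) *ᵥ Ωd t))
          *ᵥ (Ω t - ((R t)ᵀ * Rd t) *ᵥ Ωd t)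
        - kR • eR 1 (R t) (Rd t) - kΩ • (Ω t - ((R t)ᵀ * Rd t) *ᵥ Ωd t)) i
      = ∑ j, J i j * (Ω' t j - ∑ k, ((∑ l, ((R t * hat (Ω t)) l j * Rd t l k + R t l j * (Rd t * hat (Ωd t)) l k)) * Ωd t k
        + (∑ l, R t l j * Rd t l k) * Ωd' t k)) := by
    rw [congrFun hvecEq i]
    rw [show (J *ᵥ (Ω' t - (-(crossProduct (Ω t) (((R t)ᵀ * Rd t) *ᵥ Ωd t))
          + ((R t)ᵀ * Rd t) *ᵥ Ωd' t))) i
        = ∑ j, J i j * (Ω' t j - (-(crossProduct (Ω t) (((R t)ᵀ * Rd t) *ᵥ Ωd t))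
          + ((R t)ᵀ * Rd t) *ᵥ Ωd' t) j) from by
      simp [Matrix.mulVec, dotProduct, Pi.sub_apply]]
    exact Finset.sum_congr rfl fun j _ => by rw [hS j]
  show HasDerivAt (fun s => (J *ᵥ (Ω s - ((R s)ᵀ * Rd s) *ᵥ Ωd s)) i) _ t
  rw [hfun, goal_eq]
  exact main
end
end

section
/- (Lyapunov function bounds for attitude dynamics) Let J be symmetric positive definite with eigenvalue bounds λ_m ≤ λ_M, let k_R, c₂ > 0, and suppose Ψ(R,R_d) < ψ₂ < 2. Define V₂ = (1/2) e_Ω·Je_Ω + k_R Ψ(R,R_d) + c₂ e_R·Je_Ω, with Ψ = (1/2)tr(I−R_dᵀR), e_R = (1/2)(R_dᵀR−RᵀR_d)^∨. Then z₂ᵀM₂₁z₂ ≤ V₂ ≤ z₂ᵀM₂₂z₂ where z₂ = (‖e_R‖,‖e_Ω‖), M₂₁ = (1/2)[[k_R, −c₂λ_M],[−c₂λ_M, λ_m]], M₂₂ = (1/2)[[2k_R/(2−ψ₂), c₂λ_M],[c₂λ_M, λ_M]]. -/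
open Matrix

noncomputable section

lemma dp_self_nonneg {n : ℕ} (v : Fin n → ℝ) : 0 ≤ v ⬝ᵥ v :=
  Fintype.sum_nonneg fun i => mul_self_nonneg (v i)

/-- Cauchy–Schwarz for the PSD form of `J`, with operator bound `lM`. -/
lemma cs_bound (J : Matrix (Fin 3) (Fin 3) ℝ) (hJ : J.PosDef) (lM : ℝ)
    (hlM : ∀ x : Fin 3 → ℝ, x ⬝ᵥ (J *ᵥ x) ≤ lM * (x ⬝ᵥ x)) (x y : Fin 3 → ℝ) :
    |x ⬝ᵥ (J *ᵥ y)| ≤ lM * norm3 x * norm3 y := by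
  have hJt : Jᵀ = J := by simpa using hJ.1.eq
  have hpsd : ∀ z : Fin 3 → ℝ, 0 ≤ z ⬝ᵥ (J *ᵥ z) := fun z => by
    simpa using hJ.posSemidef.dotProduct_mulVec_nonneg z
  have hsymm : ∀ u v : Fin 3 → ℝ, u ⬝ᵥ (J *ᵥ v) = v ⬝ᵥ (J *ᵥ u) := fun u v => by
    rw [Matrix.dotProduct_mulVec, ← Matrix.mulVec_transpose, hJt, dotProduct_comm]
  set a := x ⬝ᵥ (J *ᵥ x) with ha
  set b := x ⬝ᵥ (J *ᵥ y) with hb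
  set c := y ⬝ᵥ (J *ᵥ y) with hc
  have key : ∀ t : ℝ, 0 ≤ a * (t * t) + (2 * b) * t + c := by
    intro t
    have h := hpsd (t • x + y)
    have hexp : (t • x + y) ⬝ᵥ (J *ᵥ (t • x + y)) = a * (t * t) + (2 * b) * t + c := by
      simp only [Matrix.mulVec_add, Matrix.mulVec_smul, dotProduct_add,
        add_dotProduct, smul_dotProduct, dotProduct_smul,
        smul_eq_mul]
      rw [hsymm y x]
      ring
    linarith [hexp ▸ h]
  have hdisc := discrim_le_zero key
  rw [discrim] at hdisc
  have hb2 : b ^ 2 ≤ a * c := by nlinarith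
  have hnx : norm3 x * norm3 x = x ⬝ᵥ x := Real.mul_self_sqrt (dp_self_nonneg x)
  have hny : norm3 y * norm3 y = y ⬝ᵥ y := Real.mul_self_sqrt (dp_self_nonneg y)
  have hnx0 : 0 ≤ norm3 x := Real.sqrt_nonneg _
  have hny0 : 0 ≤ norm3 y := Real.sqrt_nonneg _
  have hlM0 : 0 ≤ lM := by
    have h1 := hlM e3
    have h2 := hpsd e3
    have h3 : (e3 ⬝ᵥ e3 : ℝ) = 1 := by
      simp [e3, dotProduct, Fin.sum_univ_succ]
    nlinarith
  have hac : a * c ≤ (lM * norm3 x * norm3 y) ^ 2 := by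
    have h1 : a ≤ lM * (norm3 x * norm3 x) := by rw [hnx]; exact hlM x
    have h2 : c ≤ lM * (norm3 y * norm3 y) := by rw [hny]; exact hlM y
    nlinarith [hpsd x, hpsd y]
  have hK : 0 ≤ lM * norm3 x * norm3 y := by positivity
  rw [abs_le]
  constructor <;> nlinarith [hb2]

/-- Key algebraic facts for a rotation matrix `Q ∈ SO(3)`. -/
lemma so3_key (Q : Matrix (Fin 3) (Fin 3) ℝ) (hQT : Qᵀ * Q = 1) (hdet : Q.det = 1) :
    (1/4) * ((Q 2 1 - Q 1 2)^2 + (Q 0 2 - Q 2 0)^2 + (Q 1 0 - Q 0 1)^2)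
      = ((3 - (Q 0 0 + Q 1 1 + Q 2 2))/2) * (2 - (3 - (Q 0 0 + Q 1 1 + Q 2 2))/2)
    ∧ Q 0 0 + Q 1 1 + Q 2 2 ≤ 3 := by
  have hadj : Q.adjugate = Qᵀ := by
    have h1 : Q * Q.adjugate = 1 := by rw [Matrix.mul_adjugate, hdet, one_smul]
    calc Q.adjugate = Qᵀ * Q * Q.adjugate := by rw [hQT, Matrix.one_mul]
      _ = Qᵀ * (Q * Q.adjugate) := by rw [Matrix.mul_assoc]
      _ = Qᵀ := by rw [h1, Matrix.mul_one]
  have hcol : ∀ j : Fin 3, Q 0 j * Q 0 j + Q 1 j * Q 1 j + Q 2 j * Q 2 j = 1 := by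
    intro j
    have h := congrFun (congrFun hQT j) j
    simp [Matrix.mul_apply, Fin.sum_univ_succ, Matrix.one_apply] at h
    linear_combination h
  have hcof0 : Q 1 1 * Q 2 2 - Q 1 2 * Q 2 1 = Q 0 0 := by
    have h := congrFun (congrFun hadj 0) 0
    rw [Matrix.adjugate_fin_three] at h
    simpa using h
  have hcof1 : Q 0 0 * Q 2 2 - Q 0 2 * Q 2 0 = Q 1 1 := by
    have h := congrFun (congrFun hadj 1) 1
    rw [Matrix.adjugate_fin_three] at h
    simp at h
    linarith
  have hcof2 : Q 0 0 * Q 1 1 - Q 0 1 * Q 1 0 = Q 2 2 := by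
    have h := congrFun (congrFun hadj 2) 2
    rw [Matrix.adjugate_fin_three] at h
    simpa using h
  constructor
  · linear_combination (1/4 : ℝ) * hcol 0 + (1/4 : ℝ) * hcol 1 + (1/4 : ℝ) * hcol 2
      + (1/2 : ℝ) * hcof0 + (1/2 : ℝ) * hcof1 + (1/2 : ℝ) * hcof2
  · nlinarith [hcol 0, hcol 1, hcol 2, sq_nonneg (Q 0 0 - 1), sq_nonneg (Q 1 1 - 1),
      sq_nonneg (Q 2 2 - 1), sq_nonneg (Q 1 0), sq_nonneg (Q 2 0),
      sq_nonneg (Q 0 1), sq_nonneg (Q 2 1), sq_nonneg (Q 0 2), sq_nonneg (Q 1 2)]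

/-- Lyapunov function bounds `z₂ᵀ M₂₁ z₂ ≤ V₂ ≤ z₂ᵀ M₂₂ z₂` for
`V₂ = (1/2) e_Ω⋅Je_Ω + k_R Ψ(R,R_d) + c₂ e_R⋅Je_Ω`, where `λ_m, λ_M` are eigenvalue
bounds of the symmetric positive definite inertia matrix `J`. -/
theorem lyapunov_bounds
    (J : Matrix (Fin 3) (Fin 3) ℝ) (hJ : J.PosDef)
    (lm lM : ℝ) (hlmM : lm ≤ lM)
    (hlm : ∀ x : Fin 3 → ℝ, lm * (x ⬝ᵥ x) ≤ x ⬝ᵥ (J *ᵥ x))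
    (hlM : ∀ x : Fin 3 → ℝ, x ⬝ᵥ (J *ᵥ x) ≤ lM * (x ⬝ᵥ x))
    (kR c₂ ψ₂ : ℝ) (hkR : 0 < kR) (hc₂ : 0 < c₂) (hψ₂ : ψ₂ < 2)
    (R Rd : Matrix (Fin 3) (Fin 3) ℝ) (hR : SO3 R) (hRd : SO3 Rd)
    (hΨ : Psi 1 R Rd < ψ₂) (eΩ : Fin 3 → ℝ) :
    ![norm3 (eR 1 R Rd), norm3 eΩ] ⬝ᵥ
        (((1 / 2 : ℝ) • !![kR, -c₂ * lM; -c₂ * lM, lm])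
          *ᵥ ![norm3 (eR 1 R Rd), norm3 eΩ])
      ≤ (1 / 2) * (eΩ ⬝ᵥ (J *ᵥ eΩ)) + kR * Psi 1 R Rd
          + c₂ * (eR 1 R Rd ⬝ᵥ (J *ᵥ eΩ)) ∧
    (1 / 2) * (eΩ ⬝ᵥ (J *ᵥ eΩ)) + kR * Psi 1 R Rd + c₂ * (eR 1 R Rd ⬝ᵥ (J *ᵥ eΩ))
      ≤ ![norm3 (eR 1 R Rd), norm3 eΩ] ⬝ᵥ
        (((1 / 2 : ℝ) • !![2 * kR / (2 - ψ₂), c₂ * lM; c₂ * lM, lM])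
          *ᵥ ![norm3 (eR 1 R Rd), norm3 eΩ]) := by
  have hRdRdT : Rd * Rdᵀ = 1 := by
    have := hRd.1
    rwa [mul_eq_one_comm] at this
  have hQT : (Rdᵀ * R)ᵀ * (Rdᵀ * R) = 1 := by
    rw [Matrix.transpose_mul, Matrix.transpose_transpose]
    calc Rᵀ * Rd * (Rdᵀ * R) = Rᵀ * (Rd * Rdᵀ) * R := by noncomm_ring
      _ = 1 := by rw [hRdRdT, Matrix.mul_one, hR.1]
  have hQdet : (Rdᵀ * R).det = 1 := by
    rw [Matrix.det_mul, Matrix.det_transpose, hRd.2, hR.2, one_mul]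
  obtain ⟨hid, htr⟩ := so3_key (Rdᵀ * R) hQT hQdet
  set Q : Matrix (Fin 3) (Fin 3) ℝ := Rdᵀ * R with hQdef
  set ψ := Psi 1 R Rd with hψdef
  have hψval : ψ = (3 - (Q 0 0 + Q 1 1 + Q 2 2)) / 2 := by
    rw [hψdef, Psi, Matrix.one_mul, Matrix.trace]
    simp [Matrix.diag, Fin.sum_univ_succ, Matrix.one_apply, ← hQdef]
    ring
  set r := norm3 (eR 1 R Rd) with hrdef
  set ω := norm3 eΩ with hωdef
  have hr0 : 0 ≤ r := Real.sqrt_nonneg _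
  have hω0 : 0 ≤ ω := Real.sqrt_nonneg _
  have heRdot : eR 1 R Rd ⬝ᵥ eR 1 R Rd =
      (1/4) * ((Q 2 1 - Q 1 2)^2 + (Q 0 2 - Q 2 0)^2 + (Q 1 0 - Q 0 1)^2) := by
    have he : eR 1 R Rd = (1/2 : ℝ) • ![Q 2 1 - Q 1 2, Q 0 2 - Q 2 0, Q 1 0 - Q 0 1] := by
      rw [eR, Matrix.one_mul, Matrix.mul_one]
      funext i
      fin_cases i <;>
        simp [vee, hQdef, Matrix.sub_apply, Matrix.transpose_apply, Matrix.mul_apply,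
          Fin.sum_univ_succ, mul_comm]
    rw [he]
    simp [dotProduct, Fin.sum_univ_succ]
    ring
  have hr2 : r * r = eR 1 R Rd ⬝ᵥ eR 1 R Rd := by
    rw [hrdef]; unfold norm3; exact Real.mul_self_sqrt (dp_self_nonneg _)
  have hω2 : ω * ω = eΩ ⬝ᵥ eΩ := by
    rw [hωdef]; unfold norm3; exact Real.mul_self_sqrt (dp_self_nonneg _)
  have hkey : r * r = ψ * (2 - ψ) := by rw [hr2, heRdot, hid, ← hψval]
  have hψ0 : 0 ≤ ψ := by rw [hψval]; linarith
  have hr2le : r * r ≤ 2 * ψ := by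
    have e : ψ * (2 - ψ) = 2 * ψ - ψ * ψ := by ring
    have h := mul_self_nonneg ψ
    linarith
  have hψle : (2 - ψ₂) * ψ ≤ r * r := by
    have h1 : 0 ≤ ψ * (ψ₂ - ψ) := mul_nonneg hψ0 (by linarith)
    have e : ψ * (2 - ψ) - (2 - ψ₂) * ψ = ψ * (ψ₂ - ψ) := by ring
    linarith
  have hcs := cs_bound J hJ lM hlM (eR 1 R Rd) eΩ
  rw [← hrdef, ← hωdef, abs_le] at hcs
  have hJm : lm * (ω * ω) ≤ eΩ ⬝ᵥ (J *ᵥ eΩ) := by rw [hω2]; exact hlm eΩ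
  have hJM : eΩ ⬝ᵥ (J *ᵥ eΩ) ≤ lM * (ω * ω) := by rw [hω2]; exact hlM eΩ
  have h2ψ₂ : 0 < 2 - ψ₂ := by linarith
  set A := eΩ ⬝ᵥ (J *ᵥ eΩ) with hAdef
  set B := eR 1 R Rd ⬝ᵥ (J *ᵥ eΩ) with hBdef
  constructor
  · have hz : ![r, ω] ⬝ᵥ (((1 / 2 : ℝ) • !![kR, -c₂ * lM; -c₂ * lM, lm]) *ᵥ ![r, ω])
        = (1/2) * (kR * (r*r) - 2 * c₂ * lM * r * ω + lm * (ω*ω)) := by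
      simp [Matrix.mulVec, dotProduct, Fin.sum_univ_succ]
      ring
    rw [hz]
    have f1 : kR * (r * r) ≤ kR * (2 * ψ) := mul_le_mul_of_nonneg_left hr2le hkR.le
    have f2 : c₂ * (-(lM * r * ω)) ≤ c₂ * B := mul_le_mul_of_nonneg_left hcs.1 hc₂.le
    linarith
  · have hz : ![r, ω] ⬝ᵥ (((1 / 2 : ℝ) • !![2 * kR / (2 - ψ₂), c₂ * lM; c₂ * lM, lM]) *ᵥ ![r, ω])
        = (1/2) * (2 * kR / (2 - ψ₂) * (r*r) + 2 * c₂ * lM * r * ω + lM * (ω*ω)) := by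
      simp [Matrix.mulVec, dotProduct, Fin.sum_univ_succ]
      ring
    rw [hz]
    have hψub : kR * ψ ≤ kR / (2 - ψ₂) * (r * r) := by
      rw [div_mul_eq_mul_div, le_div_iff₀ h2ψ₂]
      have h1 : kR * ((2 - ψ₂) * ψ) ≤ kR * (r * r) := mul_le_mul_of_nonneg_left hψle hkR.le
      have e : kR * ψ * (2 - ψ₂) = kR * ((2 - ψ₂) * ψ) := by ring
      linarith
    have f2 : c₂ * B ≤ c₂ * (lM * r * ω) := mul_le_mul_of_nonneg_left hcs.2 hc₂.le
    have e2 : 2 * kR / (2 - ψ₂) * (r * r) = 2 * (kR / (2 - ψ₂) * (r * r)) := by ring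
    linarith
end
end
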